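/- arXiv:1506.06738 — 10 statements merged into one kernel-verified Lean document; each statement's English description precedes it below -/
import Mathlib

section
/- Let n ≥ 1 and let A be an n×n unitary matrix over ℂ. Then A has a biunimodular vector if and only if there exist matrices D₁, S, D₂ ∈ U(n) such that A = D₁ · S · D₂, where D₁ is a diagonal matrix whose diagonal entries all have modulus 1, S satisfies S·𝟏 = 𝟏 (with 𝟏 the all-ones vector), and D₂ is a diagonal matrix whose diagonal entries all have modulus 1 and whose first diagonal entry equals 1. -/
open scoped Matrix

lemma unimod_mul_conj {z : ℂ} (h : ‖z‖ = 1) : z * (starRingEnd ℂ) z = 1 := by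
  rw [Complex.mul_conj, Complex.normSq_eq_norm_sq, h]; norm_num

lemma diag_unitary {n : ℕ} (d : Fin n → ℂ) (h : ∀ i, ‖d i‖ = 1) :
    Matrix.diagonal d ∈ Matrix.unitaryGroup (Fin n) ℂ := by
  rw [Matrix.mem_unitaryGroup_iff]
  have hs : star (Matrix.diagonal d) = Matrix.diagonal (star d) := Matrix.diagonal_conjTranspose d
  rw [hs, Matrix.diagonal_mul_diagonal]
  have : (fun i => d i * star d i) = fun _ => (1:ℂ) := funext fun i => unimod_mul_conj (h i)
  rw [this, Matrix.diagonal_one]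



/-- A vector `v` is biunimodular for `A` if every entry of `v` and of `A.mulVec v`
has modulus 1. -/
def IsBiunimodular {n : ℕ} (A : Matrix (Fin n) (Fin n) ℂ) (v : Fin n → ℂ) : Prop :=
  (∀ k, ‖v k‖ = 1) ∧ ∀ k, ‖A.mulVec v k‖ = 1

/-- A unitary matrix `A` has a biunimodular vector iff `A = D₁ * S * D₂` with
`D₁, S, D₂` unitary, `D₁` diagonal with unimodular diagonal entries, `S` fixing the
all-ones vector, and `D₂` diagonal with unimodular diagonal entries whose first
diagonal entry is `1`. -/
theorem unitary_has_biunimodular_iff_factorization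
    (n : ℕ) (hn : 1 ≤ n) (A : Matrix (Fin n) (Fin n) ℂ)
    (hA : A ∈ Matrix.unitaryGroup (Fin n) ℂ) :
    (∃ v : Fin n → ℂ, IsBiunimodular A v) ↔
      ∃ D₁ S D₂ : Matrix (Fin n) (Fin n) ℂ,
        D₁ ∈ Matrix.unitaryGroup (Fin n) ℂ ∧ D₁.IsDiag ∧
          (∀ i, ‖D₁ i i‖ = 1) ∧
        S ∈ Matrix.unitaryGroup (Fin n) ℂ ∧
          S.mulVec (fun _ => 1) = (fun _ => 1) ∧
        D₂ ∈ Matrix.unitaryGroup (Fin n) ℂ ∧ D₂.IsDiag ∧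
          (∀ i, ‖D₂ i i‖ = 1) ∧ D₂ ⟨0, hn⟩ ⟨0, hn⟩ = 1 ∧
        A = D₁ * S * D₂ := by
  constructor
  · rintro ⟨v, hv1, hv2⟩
    set w := A.mulVec v with hw
    set z := v ⟨0, hn⟩ with hz
    set d₁ : Fin n → ℂ := fun i => w i * (starRingEnd ℂ) z with hd₁
    set d₂ : Fin n → ℂ := fun i => z * (starRingEnd ℂ) (v i) with hd₂
    have habs1 : ∀ i, ‖d₁ i‖ = 1 := fun i => by
      simp [hd₁, map_mul, Complex.norm_conj, hv2 i, hz, hv1 ⟨0, hn⟩]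
    have habs2 : ∀ i, ‖d₂ i‖ = 1 := fun i => by
      simp [hd₂, map_mul, Complex.norm_conj, hv1 i, hz, hv1 ⟨0, hn⟩]
    have hD₁ := diag_unitary d₁ habs1
    have hD₂ := diag_unitary d₂ habs2
    set D₁ := Matrix.diagonal d₁
    set D₂ := Matrix.diagonal d₂
    set S := star D₁ * A * star D₂ with hS
    have hSu : S ∈ Matrix.unitaryGroup (Fin n) ℂ :=
      mul_mem (mul_mem (Unitary.star_mem hD₁) hA) (Unitary.star_mem hD₂)
    refine ⟨D₁, S, D₂, hD₁, Matrix.isDiag_diagonal d₁, ?_, hSu, ?_, hD₂,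
      Matrix.isDiag_diagonal d₂, ?_, ?_, ?_⟩
    · intro i; simpa [D₁, Matrix.diagonal_apply_eq] using habs1 i
    · -- S ·1 = 1
      have hsD₁ : star D₁ = Matrix.diagonal (star d₁) := Matrix.diagonal_conjTranspose d₁
      have hsD₂ : star D₂ = Matrix.diagonal (star d₂) := Matrix.diagonal_conjTranspose d₂
      funext k
      rw [hS, ← Matrix.mulVec_mulVec, ← Matrix.mulVec_mulVec, hsD₁, hsD₂]
      have h1 : Matrix.diagonal (star d₂) *ᵥ (fun _ => (1:ℂ)) = fun i => (starRingEnd ℂ) z * v i := by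
        funext i
        simp [Matrix.mulVec_diagonal, hd₂, map_mul, mul_comm]
      rw [h1]
      have h2 : A *ᵥ (fun i => (starRingEnd ℂ) z * v i) = fun i => (starRingEnd ℂ) z * w i := by
        have : (fun i => (starRingEnd ℂ) z * v i) = (starRingEnd ℂ) z • v := by
          funext i; simp [Pi.smul_apply, smul_eq_mul]
        rw [this, Matrix.mulVec_smul, hw]
        funext i; simp [Pi.smul_apply, smul_eq_mul]
      rw [h2, Matrix.mulVec_diagonal]
      have : star d₁ k * ((starRingEnd ℂ) z * w k)
          = (w k * (starRingEnd ℂ) (w k)) * (z * (starRingEnd ℂ) z) := by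
        simp [hd₁, Pi.star_apply, map_mul]; ring
      rw [this, unimod_mul_conj (hv2 k), unimod_mul_conj (hv1 ⟨0, hn⟩), one_mul]
    · intro i; simpa [D₂, Matrix.diagonal_apply_eq] using habs2 i
    · simp [D₂, Matrix.diagonal_apply_eq, hd₂]
      exact unimod_mul_conj (hv1 ⟨0, hn⟩)
    · have e1 : D₁ * star D₁ = 1 := hD₁.2
      have e2 : star D₂ * D₂ = 1 := hD₂.1
      rw [hS]
      calc A = (D₁ * star D₁) * A * (star D₂ * D₂) := by rw [e1, e2, one_mul, mul_one]
      _ = D₁ * (star D₁ * A * star D₂) * D₂ := by noncomm_ring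
  · rintro ⟨D₁, S, D₂, h1u, h1d, h1m, hSu, hS1, h2u, h2d, h2m, h2f, hfac⟩
    refine ⟨fun i => (starRingEnd ℂ) (D₂ i i), fun k => by simp [Complex.norm_conj, h2m k], ?_⟩
    intro k
    have key : ∀ d : Fin n → ℂ, (∀ i, ‖d i‖ = 1) →
        Matrix.diagonal d *ᵥ (fun i => (starRingEnd ℂ) (d i)) = fun _ => (1:ℂ) := by
      intro d h
      funext i
      rw [Matrix.mulVec_diagonal]
      exact unimod_mul_conj (h i)
    have step1 : D₂ *ᵥ (fun i => (starRingEnd ℂ) (D₂ i i)) = fun _ => (1:ℂ) := by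
      have h := key (fun i => D₂ i i) h2m
      rwa [show Matrix.diagonal (fun i => D₂ i i) = D₂ from h2d.diagonal_diag] at h
    have key2 : Matrix.diagonal (fun i => D₁ i i) *ᵥ (fun _ => (1:ℂ)) = fun i => D₁ i i := by
      funext i
      rw [Matrix.mulVec_diagonal, mul_one]
    rw [show Matrix.diagonal (fun i => D₁ i i) = D₁ from h1d.diagonal_diag] at key2
    have : A *ᵥ (fun i => (starRingEnd ℂ) (D₂ i i)) = fun i => D₁ i i := by
      rw [hfac, ← Matrix.mulVec_mulVec, ← Matrix.mulVec_mulVec, step1, hS1, key2]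
    rw [this]
    exact h1m k
end

section
/- Let n ≥ 1 and let A be an n×n unitary matrix over ℂ. For every u ∈ ℂⁿ with max_k |u_k| ≤ 1 one has ∑_k |(Au)_k| ≤ n. Moreover, A has a biunimodular vector if and only if there exists u ∈ ℂⁿ with max_k |u_k| = 1 and ∑_k |(Au)_k| = n (i.e. the operator norm of A from (ℂⁿ, ‖·‖_∞) to (ℂⁿ, ‖·‖₁) equals n). -/
lemma unitary_l2_sum (n : ℕ) (A : Matrix (Fin n) (Fin n) ℂ)
    (hA : A ∈ Matrix.unitaryGroup (Fin n) ℂ) (u : Fin n → ℂ) :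
    ∑ k, ‖A.mulVec u k‖ ^ 2 = ∑ k, ‖u k‖ ^ 2 := by
  have hAA : A.conjTranspose * A = 1 := hA.1
  have key : dotProduct (star (A.mulVec u)) (A.mulVec u)
      = dotProduct (star u) u := by
    rw [Matrix.star_mulVec, Matrix.dotProduct_mulVec, Matrix.vecMul_vecMul,
      hAA, Matrix.vecMul_one]
  have h2 : ∀ z : ℂ, ((‖z‖ : ℂ)) ^ 2 = star z * z := by
    intro z
    rw [← Complex.ofReal_pow, Complex.sq_norm]
    simp [Complex.normSq_eq_conj_mul_self]
  have : (↑(∑ k, ‖A.mulVec u k‖ ^ 2) : ℂ) = ↑(∑ k, ‖u k‖ ^ 2) := by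
    push_cast
    simp only [h2]
    simpa [dotProduct] using key
  exact_mod_cast this

/-- For a unitary `A`, `‖Au‖₁ ≤ n` whenever `‖u‖_∞ ≤ 1`, and `A` has a biunimodular
vector iff the norm `n` is attained, i.e. there is `u` with `max_k |u_k| = 1` and
`‖Au‖₁ = n`. -/
theorem biunimodular_iff_infty_to_one_norm_eq
    (n : ℕ) (hn : 1 ≤ n) (A : Matrix (Fin n) (Fin n) ℂ)
    (hA : A ∈ Matrix.unitaryGroup (Fin n) ℂ) :
    (∀ u : Fin n → ℂ, (∀ k, ‖u k‖ ≤ 1) →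
        ∑ k, ‖A.mulVec u k‖ ≤ (n : ℝ)) ∧
    ((∃ v : Fin n → ℂ, IsBiunimodular A v) ↔
      ∃ u : Fin n → ℂ, (∀ k, ‖u k‖ ≤ 1) ∧ (∃ k, ‖u k‖ = 1) ∧
        ∑ k, ‖A.mulVec u k‖ = (n : ℝ)) := by
  -- basic facts
  have hsq_le : ∀ u : Fin n → ℂ, (∀ k, ‖u k‖ ≤ 1) →
      ∑ k, ‖A.mulVec u k‖ ^ 2 ≤ (n : ℝ) := by
    intro u hu
    rw [unitary_l2_sum n A hA u]
    calc ∑ k, ‖u k‖ ^ 2 ≤ ∑ _k : Fin n, (1 : ℝ) := by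
          apply Finset.sum_le_sum
          intro k _
          have h0 := norm_nonneg (u k)
          nlinarith [hu k]
      _ = (n : ℝ) := by simp
  have hCS : ∀ u : Fin n → ℂ,
      (∑ k, ‖A.mulVec u k‖) ^ 2 ≤ (n : ℝ) * ∑ k, ‖A.mulVec u k‖ ^ 2 := by
    intro u
    have := sq_sum_le_card_mul_sum_sq (s := (Finset.univ : Finset (Fin n)))
      (f := fun k => ‖A.mulVec u k‖)
    simpa using this
  have part1 : ∀ u : Fin n → ℂ, (∀ k, ‖u k‖ ≤ 1) →
      ∑ k, ‖A.mulVec u k‖ ≤ (n : ℝ) := by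
    intro u hu
    have h1 := hCS u
    have h2 := hsq_le u hu
    have h3 : (0 : ℝ) ≤ ∑ k, ‖A.mulVec u k‖ :=
      Finset.sum_nonneg fun k _ => norm_nonneg _
    have hn0 : (0 : ℝ) ≤ (n : ℝ) := Nat.cast_nonneg n
    nlinarith
  refine ⟨part1, ?_, ?_⟩
  · rintro ⟨v, hv1, hv2⟩
    refine ⟨v, fun k => (hv1 k).le, ⟨⟨0, hn⟩, hv1 _⟩, ?_⟩
    simp [hv2]
  · rintro ⟨u, h1, -, h3⟩
    -- first: ∑ a² = n where a k = |Au k|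
    have hge : (n : ℝ) ≤ ∑ k, ‖A.mulVec u k‖ ^ 2 := by
      have h := hCS u
      rw [h3] at h
      have hnpos : (0 : ℝ) < (n : ℝ) := by exact_mod_cast hn
      nlinarith
    have hsum2 : ∑ k, ‖A.mulVec u k‖ ^ 2 = (n : ℝ) :=
      le_antisymm (hsq_le u h1) hge
    have hsumu2 : ∑ k, ‖u k‖ ^ 2 = (n : ℝ) := by
      rw [← unitary_l2_sum n A hA u]; exact hsum2
    -- |u k| = 1 for all k
    have hu1 : ∀ k, ‖u k‖ = 1 := by
      have hzero : ∑ k : Fin n, (1 - ‖u k‖ ^ 2) = 0 := by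
        rw [Finset.sum_sub_distrib, hsumu2]; simp
      have hall := (Finset.sum_eq_zero_iff_of_nonneg (by
        intro k _
        have h0 := norm_nonneg (u k)
        nlinarith [h1 k])).mp hzero
      intro k
      have := hall k (Finset.mem_univ k)
      have h0 := norm_nonneg (u k)
      nlinarith
    -- |Au k| = 1 for all k
    have hAu1 : ∀ k, ‖A.mulVec u k‖ = 1 := by
      have hzero : ∑ k : Fin n, (‖A.mulVec u k‖ - 1) ^ 2 = 0 := by
        have expand : ∑ k : Fin n, (‖A.mulVec u k‖ - 1) ^ 2
            = ∑ k, ‖A.mulVec u k‖ ^ 2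
              - 2 * ∑ k, ‖A.mulVec u k‖ + n := by
          simp only [sub_sq, one_pow, mul_one]
          rw [Finset.sum_add_distrib, Finset.sum_sub_distrib, ← Finset.mul_sum]
          simp
        rw [expand, hsum2, h3]
        ring
      have hall := (Finset.sum_eq_zero_iff_of_nonneg (by
        intro k _; positivity)).mp hzero
      intro k
      have := hall k (Finset.mem_univ k)
      nlinarith
    exact ⟨u, hu1, hAu1⟩
end

section
/- Every 2×2 unitary matrix over ℂ has a biunimodular vector. -/
open Complex ComplexConjugate

lemma abs_one_of_mul_conj {w : ℂ} (h : w * conj w = 1) : ‖w‖ = 1 := by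
  have : (Complex.normSq w : ℂ) = 1 := by rw [← Complex.mul_conj]; exact h
  have h2 : Complex.normSq w = 1 := by exact_mod_cast this
  have h3 : ‖w‖ ^ 2 = 1 := by rw [Complex.sq_norm]; exact h2
  nlinarith [norm_nonneg w]



/-- Every 2×2 unitary matrix over ℂ has a biunimodular vector. -/
theorem every_unitary_2x2_has_biunimodular
    (A : Matrix (Fin 2) (Fin 2) ℂ) (hA : A ∈ Matrix.unitaryGroup (Fin 2) ℂ) :
    ∃ v : Fin 2 → ℂ, IsBiunimodular A v := by
  rw [Matrix.mem_unitaryGroup_iff] at hA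
  set a := A 0 0 with ha; set b := A 0 1 with hb; set c := A 1 0 with hc; set d := A 1 1 with hd
  have h1 : a * conj a + b * conj b = 1 := by
    have := congrFun (congrFun hA 0) 0
    simpa [Matrix.mul_apply, Fin.sum_univ_two, Matrix.one_apply, Matrix.star_apply] using this
  have h2 : c * conj c + d * conj d = 1 := by
    have := congrFun (congrFun hA 1) 1
    simpa [Matrix.mul_apply, Fin.sum_univ_two, Matrix.one_apply, Matrix.star_apply] using this
  have h3 : a * conj c + b * conj d = 0 := by
    have := congrFun (congrFun hA 0) 1
    simpa [Matrix.mul_apply, Fin.sum_univ_two, Matrix.one_apply, Matrix.star_apply] using this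
  obtain ⟨z, hz1, hz2, hz3⟩ : ∃ z : ℂ, z * conj z = 1 ∧
      (conj a * b) * z + conj ((conj a * b) * z) = 0 ∧
      (conj c * d) * z + conj ((conj c * d) * z) = 0 := by
    by_cases hu : conj a * b = 0
    · refine ⟨1, by simp, by simp [hu], ?_⟩
      have hv : conj c * d = 0 := by
        rcases mul_eq_zero.mp hu with h | h
        · have ha0 : a = 0 := by simpa using h
          have hb0 : b ≠ 0 := by
            intro hb0; rw [ha0, hb0] at h1; simp at h1
          have := h3
          rw [ha0] at this; simp at this
          rcases this with h' | h'
          · exact absurd h' hb0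
          · simp [show d = 0 by simpa using h']
        · have ha0 : a ≠ 0 := by
            intro ha0; rw [ha0, h] at h1; simp at h1
          rw [h] at h3; simp at h3
          rcases h3 with h' | h'
          · exact absurd h' ha0
          · simp [show c = 0 by simpa using h']
      simp [hv]
    · have hK : (‖conj a * b‖ : ℂ) ≠ 0 := by
        simpa using (norm_ne_zero_iff.mpr hu)
      obtain ⟨ha0, hb0⟩ : a ≠ 0 ∧ b ≠ 0 := by
        constructor <;> intro h <;> apply hu <;> simp [h]
      have hKa : (‖a‖ : ℂ) ≠ 0 := by simpa using ha0
      have hKb : (‖b‖ : ℂ) ≠ 0 := by simpa using hb0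
      have hca : (‖a‖ : ℂ) ^ 2 = (Complex.normSq a : ℂ) := by
        norm_cast; exact Complex.sq_norm a
      have hcb : (‖b‖ : ℂ) ^ 2 = (Complex.normSq b : ℂ) := by
        norm_cast; exact Complex.sq_norm b
      have hK2 : ((‖a‖ : ℂ) * (‖b‖ : ℂ)) ^ 2 = (conj a * b) * (a * conj b) := by
        rw [mul_pow, hca, hcb, ← Complex.mul_conj, ← Complex.mul_conj]; ring
      refine ⟨Complex.I * conj (conj a * b) / (‖conj a * b‖ : ℂ), ?_, ?_, ?_⟩
      · simp only [map_div₀, map_mul, Complex.conj_conj, Complex.conj_I, Complex.conj_ofReal, norm_mul, Complex.norm_conj, Complex.ofReal_mul]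
        field_simp
        linear_combination (-(conj a * b * (a * conj b))) * Complex.I_sq - hK2
      · simp only [map_div₀, map_mul, Complex.conj_conj, Complex.conj_I, Complex.conj_ofReal]
        field_simp
        ring
      · have hkey : (conj a * b) * (c * conj d) = -((a * conj a) * (c * conj c)) := by
          linear_combination (conj a * c) * h3
        have hkey2 : (a * conj b) * (conj c * d) = -((a * conj a) * (c * conj c)) := by
          have := congrArg conj hkey
          simp only [map_mul, map_neg, Complex.conj_conj] at this
          linear_combination this
        simp only [map_div₀, map_mul, Complex.conj_conj, Complex.conj_I, Complex.conj_ofReal]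
        field_simp
        linear_combination Complex.I * (hkey2 - hkey)
  refine ⟨![1, z], ?_, ?_⟩
  · intro k
    fin_cases k
    · simp
    · exact abs_one_of_mul_conj hz1
  · have key : ∀ (x y : ℂ), x * conj x + y * conj y = 1 →
        (conj x * y) * z + conj ((conj x * y) * z) = 0 → ‖x + y * z‖ = 1 := by
      intro x y hxy hxz
      simp only [map_mul, Complex.conj_conj] at hxz
      apply abs_one_of_mul_conj
      simp only [map_add, map_mul]
      linear_combination hxy + (y * conj y) * hz1 + hxz
    intro k
    have hmv : A.mulVec ![1, z] k = A k 0 + A k 1 * z := by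
      simp [Matrix.mulVec, Fin.sum_univ_two, Matrix.vecHead, Matrix.vecTail]
    rw [hmv]
    fin_cases k
    · exact key a b h1 hz2
    · exact key c d h2 hz3
end

section
/- Let A be the 2×2 complex matrix with rows (x, y) and (−z·conj(y), z·conj(x)), where z ∈ ℂ has |z| = 1 and x, y ∈ ℂ satisfy |x|² + |y|² = 1 (so A is unitary). Then for any d ∈ ℂ with |d| = 1, the vector (1, d) is a biunimodular vector for A if and only if Re(conj(x)·y·d) = 0. In particular, if x·y ≠ 0, then the biunimodular vectors for A with first entry 1 are exactly (1, i·e^{i(α−β)}) and (1, −i·e^{i(α−β)}), where α = arg x and β = arg y. -/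
lemma abs_eq_one_iff_normSq (w : ℂ) : ‖w‖ = 1 ↔ Complex.normSq w = 1 := by
  rw [← Complex.sq_norm]
  constructor
  · intro h; rw [h]; norm_num
  · intro h
    nlinarith [norm_nonneg w]

lemma normSq_add' (x y d : ℂ) :
    Complex.normSq (x + y * d) =
      Complex.normSq x + Complex.normSq y * Complex.normSq d
        + 2 * ((starRingEnd ℂ) x * y * d).re := by
  simp [Complex.normSq_apply, Complex.mul_re, Complex.mul_im, Complex.add_re, Complex.add_im]
  ring

lemma normSq_sub' (x y d : ℂ) :
    Complex.normSq ((starRingEnd ℂ) x * d - (starRingEnd ℂ) y) =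
      Complex.normSq x * Complex.normSq d + Complex.normSq y
        - 2 * ((starRingEnd ℂ) x * y * d).re := by
  simp [Complex.normSq_apply, Complex.mul_re, Complex.mul_im, Complex.sub_re, Complex.sub_im]
  ring

lemma part1 (x y z : ℂ) (hz : ‖z‖ = 1)
    (hxy : ‖x‖ ^ 2 + ‖y‖ ^ 2 = 1)
    (d : ℂ) (hd : ‖d‖ = 1) :
    IsBiunimodular !![x, y; -z * (starRingEnd ℂ) y, z * (starRingEnd ℂ) x] ![1, d] ↔
      ((starRingEnd ℂ) x * y * d).re = 0 := by
  have hnx : Complex.normSq x + Complex.normSq y = 1 := by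
    rw [← Complex.sq_norm, ← Complex.sq_norm]; exact hxy
  have hnd : Complex.normSq d = 1 := (abs_eq_one_iff_normSq d).1 hd
  have hnz : Complex.normSq z = 1 := (abs_eq_one_iff_normSq z).1 hz
  constructor
  · rintro ⟨-, h2⟩
    have h := (abs_eq_one_iff_normSq _).1 (h2 0)
    simp [Matrix.mulVec, dotProduct, Fin.sum_univ_two] at h
    rw [normSq_add', hnd] at h
    linarith
  · intro hre
    refine ⟨?_, ?_⟩
    · intro k; fin_cases k <;> simp [hd]
    · intro k; fin_cases k <;>
        simp [Matrix.mulVec, dotProduct, Fin.sum_univ_two, abs_eq_one_iff_normSq]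
      · rw [normSq_add', hnd]; linarith
      · rw [show -(z * (starRingEnd ℂ) y) + z * (starRingEnd ℂ) x * d
            = z * ((starRingEnd ℂ) x * d - (starRingEnd ℂ) y) by ring,
          Complex.normSq_mul, normSq_sub', hnd, hnz]
        linarith

lemma eq_I_or_neg_I (w : ℂ) (h1 : ‖w‖ = 1) (h2 : w.re = 0) :
    w = Complex.I ∨ w = -Complex.I := by
  have hn : Complex.normSq w = 1 := (abs_eq_one_iff_normSq w).1 h1
  rw [Complex.normSq_apply, h2] at hn
  have : (w.im - 1) * (w.im + 1) = 0 := by ring_nf; linarith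
  rcases mul_eq_zero.1 this with h | h
  · left; apply Complex.ext <;> simp [h2] <;> linarith
  · right; apply Complex.ext <;> simp [h2] <;> linarith

lemma key (x y : ℂ) (hx : x ≠ 0) (hy : y ≠ 0) (d : ℂ) (hd : ‖d‖ = 1) :
    ((starRingEnd ℂ) x * y * d).re = 0 ↔
      d = Complex.I * Complex.exp (Complex.I * ((x.arg : ℂ) - (y.arg : ℂ))) ∨
      d = -(Complex.I * Complex.exp (Complex.I * ((x.arg : ℂ) - (y.arg : ℂ)))) := by
  set w := Complex.I * Complex.exp (Complex.I * ((x.arg : ℂ) - (y.arg : ℂ))) with hw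
  set e := Complex.exp (Complex.I * ((y.arg : ℂ) - (x.arg : ℂ))) with he
  have hew : e * w = Complex.I := by
    rw [hw, he, mul_left_comm, ← Complex.exp_add]
    norm_num
    rw [show Complex.I * ((y.arg:ℂ) - x.arg) + Complex.I * ((x.arg:ℂ) - y.arg) = 0 by ring]
    simp
  have he0 : e ≠ 0 := Complex.exp_ne_zero _
  have hxx := Complex.norm_mul_exp_arg_mul_I x
  have hyy := Complex.norm_mul_exp_arg_mul_I y
  have hcx : (starRingEnd ℂ) x
      = (‖x‖ : ℂ) * Complex.exp (-((x.arg : ℂ) * Complex.I)) := by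
    nth_rewrite 1 [← hxx]
    rw [map_mul, Complex.conj_ofReal, ← Complex.exp_conj, map_mul,
      Complex.conj_ofReal, Complex.conj_I]
    congr 1
    ring
  have hkey : (starRingEnd ℂ) x * y = ((‖x‖ * ‖y‖ : ℝ) : ℂ) * e := by
    rw [hcx]
    nth_rewrite 1 [← hyy]
    rw [he, mul_mul_mul_comm, ← Complex.exp_add]
    push_cast
    congr 1
    ring
  have hab : (0:ℝ) < ‖x‖ * ‖y‖ :=
    mul_pos (norm_pos_iff.2 hx) (norm_pos_iff.2 hy)
  have hre : ((starRingEnd ℂ) x * y * d).re = (‖x‖ * ‖y‖) * (e * d).re := by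
    rw [hkey, mul_assoc, Complex.re_ofReal_mul]
  have habs : ‖e‖ = 1 := by
    rw [he, Complex.norm_exp]
    norm_num [Complex.mul_re]
  constructor
  · intro h
    rw [hre] at h
    have hed : (e * d).re = 0 := by
      rcases mul_eq_zero.1 h with h' | h'
      · exact absurd h' (ne_of_gt hab)
      · exact h'
    have habs2 : ‖e * d‖ = 1 := by rw [norm_mul, habs, hd, mul_one]
    rcases eq_I_or_neg_I _ habs2 hed with h' | h'
    · left
      have : e * d = e * w := by rw [h', hew]
      exact mul_left_cancel₀ he0 this
    · right
      have : e * d = e * (-w) := by rw [h', mul_neg, hew]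
      exact mul_left_cancel₀ he0 this
  · rintro (rfl | rfl) <;> rw [hre] <;> simp [hew, mul_neg]

/-- For the generic unitary 2×2 matrix with rows `(x, y)` and
`(-z·conj y, z·conj x)`: a vector `(1, d)` with `|d| = 1` is biunimodular iff
`Re(conj x · y · d) = 0`; and if `x·y ≠ 0` then the biunimodular vectors with
first entry `1` are exactly `(1, ±i·e^{i(arg x − arg y)})`. -/
theorem biunimodular_vectors_of_u2
    (x y z : ℂ) (hz : ‖z‖ = 1)
    (hxy : ‖x‖ ^ 2 + ‖y‖ ^ 2 = 1) :
    (∀ d : ℂ, ‖d‖ = 1 →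
      (IsBiunimodular !![x, y; -z * (starRingEnd ℂ) y, z * (starRingEnd ℂ) x] ![1, d] ↔
        ((starRingEnd ℂ) x * y * d).re = 0)) ∧
    (x * y ≠ 0 → ∀ v : Fin 2 → ℂ,
      (v 0 = 1 ∧ IsBiunimodular !![x, y; -z * (starRingEnd ℂ) y, z * (starRingEnd ℂ) x] v) ↔
      (v = ![1, Complex.I * Complex.exp (Complex.I * ((x.arg : ℂ) - (y.arg : ℂ)))] ∨
       v = ![1, -(Complex.I * Complex.exp (Complex.I * ((x.arg : ℂ) - (y.arg : ℂ))))])) := by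
  refine ⟨fun d hd => part1 x y z hz hxy d hd, fun hxy0 v => ?_⟩
  have hx : x ≠ 0 := fun h => hxy0 (by simp [h])
  have hy : y ≠ 0 := fun h => hxy0 (by simp [h])
  have habsw : ‖(Complex.I *
      Complex.exp (Complex.I * ((x.arg : ℂ) - (y.arg : ℂ))))‖ = 1 := by
    simp [Complex.norm_exp, Complex.mul_re]
  constructor
  · rintro ⟨hv0, hb⟩
    have hv : v = ![1, v 1] := by
      funext i; fin_cases i <;> simp [hv0]
    have hd1 : ‖v 1‖ = 1 := hb.1 1
    have hb' : IsBiunimodular _ ![1, v 1] := hv ▸ hb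
    have hre := (part1 x y z hz hxy (v 1) hd1).1 hb'
    rcases (key x y hx hy (v 1) hd1).1 hre with h | h
    · left; rw [hv, h]
    · right; rw [hv, h]
  · rintro (rfl | rfl)
    · refine ⟨by simp, (part1 x y z hz hxy _ habsw).2 ?_⟩
      exact (key x y hx hy _ habsw).2 (Or.inl rfl)
    · have habsw' : ‖(-(Complex.I *
          Complex.exp (Complex.I * ((x.arg : ℂ) - (y.arg : ℂ)))))‖ = 1 := by
        rwa [norm_neg]
      refine ⟨by simp, (part1 x y z hz hxy _ habsw').2 ?_⟩
      exact (key x y hx hy _ habsw').2 (Or.inr rfl)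
end

section
/- Let n ≥ 1, let A be an n×n unitary matrix over ℂ, and let u, w ∈ ℂⁿ be such that every nonzero entry of each of the vectors u, w, Au, Aw has modulus 1, the supports of u and w are disjoint with supp(u) ∪ supp(w) = {1,…,n}, and the supports of Au and Aw are disjoint with supp(Au) ∪ supp(Aw) = {1,…,n}. Then for every z ∈ ℂ with |z| = 1, the vector u + z·w is a biunimodular vector for A. -/
/-- If `u, w, Au, Aw` are unimodular on their supports, the supports of `u` and `w`
are disjoint and cover everything, and likewise for `Au` and `Aw`, then `u + z·w`
is biunimodular for every unimodular `z`. -/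
theorem biunimodular_of_complementary_supports
    (n : ℕ) (hn : 1 ≤ n) (A : Matrix (Fin n) (Fin n) ℂ)
    (hA : A ∈ Matrix.unitaryGroup (Fin n) ℂ) (u w : Fin n → ℂ)
    (hu : ∀ k, u k ≠ 0 → ‖u k‖ = 1)
    (hw : ∀ k, w k ≠ 0 → ‖w k‖ = 1)
    (hAu : ∀ k, A.mulVec u k ≠ 0 → ‖A.mulVec u k‖ = 1)
    (hAw : ∀ k, A.mulVec w k ≠ 0 → ‖A.mulVec w k‖ = 1)
    (hdisj : ∀ k, ¬(u k ≠ 0 ∧ w k ≠ 0))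
    (hcover : ∀ k, u k ≠ 0 ∨ w k ≠ 0)
    (hdisj' : ∀ k, ¬(A.mulVec u k ≠ 0 ∧ A.mulVec w k ≠ 0))
    (hcover' : ∀ k, A.mulVec u k ≠ 0 ∨ A.mulVec w k ≠ 0) :
    ∀ z : ℂ, ‖z‖ = 1 → IsBiunimodular A (u + z • w) := by
  intro z hz
  constructor
  · intro k
    rcases hcover k with h | h
    · have hwk : w k = 0 := by
        by_contra hwk; exact hdisj k ⟨h, hwk⟩
      simp [hwk, hu k h]
    · have huk : u k = 0 := by
        by_contra huk; exact hdisj k ⟨huk, h⟩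
      simp [huk, map_mul, hz, hw k h]
  · intro k
    have hmv : A.mulVec (u + z • w) k = A.mulVec u k + z * A.mulVec w k := by
      rw [Matrix.mulVec_add, Matrix.mulVec_smul]
      simp
    rw [hmv]
    rcases hcover' k with h | h
    · have hwk : A.mulVec w k = 0 := by
        by_contra hwk; exact hdisj' k ⟨h, hwk⟩
      simp [hwk, hAu k h]
    · have huk : A.mulVec u k = 0 := by
        by_contra huk; exact hdisj' k ⟨huk, h⟩
      simp [huk, map_mul, hz, hAw k h]
end

section
/- Let n ≥ 1 and let 𝓑ₙ denote the set of n×n unitary matrices A that possess a biunimodular vector. Then 𝓑ₙ equals the set of products D₁·S·D₂ with D₁ a unitary diagonal matrix, S a unitary matrix with S·𝟏 = 𝟏, and D₂ a unitary diagonal matrix whose first diagonal entry is 1; in particular, 𝓑ₙ is a closed and path-connected subset of the unitary group U(n). -/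
/-- The set of unitary `n×n` matrices possessing a biunimodular vector, as a subset
of the unitary group `U(n)`. -/
def biuniSet (n : ℕ) : Set (Matrix.unitaryGroup (Fin n) ℂ) :=
  {A | ∃ v : Fin n → ℂ, (∀ k, ‖v k‖ = 1) ∧
    ∀ k, ‖(A : Matrix (Fin n) (Fin n) ℂ).mulVec v k‖ = 1}

open Matrix Complex Polynomial
open scoped ComplexOrder

namespace BiuniAux

variable {n : ℕ}

abbrev Mm (n : ℕ) := Matrix (Fin n) (Fin n) ℂ

def oneVec (n : ℕ) : Fin n → ℂ := fun _ => 1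

lemma unimod_conj_mul {z : ℂ} (h : ‖z‖ = 1) : (starRingEnd ℂ) z * z = 1 := by
  have := Complex.normSq_eq_norm_sq z
  rw [mul_comm, Complex.mul_conj]
  rw [h] at this
  norm_num [this]

lemma unimod_mul_conj {z : ℂ} (h : ‖z‖ = 1) : z * (starRingEnd ℂ) z = 1 := by
  rw [mul_comm]; exact unimod_conj_mul h

lemma diagonal_mem_unitaryGroup {d : Fin n → ℂ} (hd : ∀ k, ‖d k‖ = 1) :
    Matrix.diagonal d ∈ Matrix.unitaryGroup (Fin n) ℂ := by
  rw [Matrix.mem_unitaryGroup_iff]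
  rw [Matrix.star_eq_conjTranspose, Matrix.diagonal_conjTranspose, Matrix.diagonal_mul_diagonal]
  have h : (fun i => d i * (star d) i) = fun _ => (1:ℂ) := funext fun k => by
    simpa [Complex.star_def] using unimod_mul_conj (hd k)
  rw [h, Matrix.diagonal_one]

lemma abs_diag_of_unitary {D : Mm n} (hD : D ∈ Matrix.unitaryGroup (Fin n) ℂ)
    (hdiag : D.IsDiag) (k : Fin n) : ‖D k k‖ = 1 := by
  have h1 : (star D * D) k k = 1 := by
    rw [hD.1]; simp
  rw [Matrix.mul_apply] at h1
  have h2 : ∀ j, (star D) k j * D j k = if j = k then (starRingEnd ℂ) (D k k) * D k k else 0 := by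
    intro j
    by_cases hj : j = k
    · subst hj; simp [Matrix.star_apply]
    · simp [hdiag hj, hj]
  rw [Finset.sum_congr rfl (fun j _ => h2 j)] at h1
  simp at h1
  have : ‖(starRingEnd ℂ) (D k k) * D k k‖ = 1 := by rw [h1]; simp
  rw [norm_mul, Complex.norm_conj] at this
  nlinarith [norm_nonneg (D k k)]


lemma norm_mulVec_unitary {A : Mm n} (hA : star A * A = 1) (x : Fin n → ℂ) :
    star (A *ᵥ x) ⬝ᵥ (A *ᵥ x) = star x ⬝ᵥ x := by
  rw [Matrix.star_mulVec, Matrix.dotProduct_mulVec, Matrix.vecMul_vecMul,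
    ← Matrix.star_eq_conjTranspose, hA, Matrix.vecMul_one]

lemma mem_biuniSet_of (A : Matrix.unitaryGroup (Fin n) ℂ) (d₁ d₂ : Fin n → ℂ)
    (h₁ : ∀ k, ‖d₁ k‖ = 1) (h₂ : ∀ k, ‖d₂ k‖ = 1)
    (S : Mm n) (hS : S *ᵥ oneVec n = oneVec n)
    (hA : (A : Mm n) = Matrix.diagonal d₁ * S * Matrix.diagonal d₂) :
    A ∈ biuniSet n := by
  refine ⟨fun k => (starRingEnd ℂ) (d₂ k), fun k => by simp [h₂ k], ?_⟩
  intro k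
  have hd2 : Matrix.diagonal d₂ *ᵥ (fun k => (starRingEnd ℂ) (d₂ k)) = oneVec n := by
    funext j; rw [Matrix.mulVec_diagonal]; exact unimod_mul_conj (h₂ j)
  show ‖((A : Mm n) *ᵥ fun k => (starRingEnd ℂ) (d₂ k)) k‖ = 1
  rw [hA, ← Matrix.mulVec_mulVec, ← Matrix.mulVec_mulVec, hd2, hS, Matrix.mulVec_diagonal]
  simpa [oneVec] using h₁ k

lemma decomp (hn : 1 ≤ n) (A : Matrix.unitaryGroup (Fin n) ℂ) (hA : A ∈ biuniSet n) :
    ∃ D₁ S D₂ : Matrix.unitaryGroup (Fin n) ℂ,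
      (D₁ : Mm n).IsDiag ∧ (S : Mm n) *ᵥ oneVec n = oneVec n ∧ (D₂ : Mm n).IsDiag ∧
      (D₂ : Mm n) ⟨0, hn⟩ ⟨0, hn⟩ = 1 ∧ A = D₁ * S * D₂ := by
  obtain ⟨v, hv, hw⟩ := hA
  set w : Fin n → ℂ := (A : Mm n) *ᵥ v with hwdef
  set z : ℂ := v ⟨0, hn⟩ with hzdef
  set d₁ : Fin n → ℂ := fun k => w k * (starRingEnd ℂ) z with hd₁def
  set d₂ : Fin n → ℂ := fun k => z * (starRingEnd ℂ) (v k) with hd₂def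
  have h₁ : ∀ k, ‖d₁ k‖ = 1 := fun k => by
    simp [hd₁def, _root_.map_mul, hw k, hv, hzdef]
  have h₂ : ∀ k, ‖d₂ k‖ = 1 := fun k => by
    simp [hd₂def, _root_.map_mul, hv, hzdef]
  refine ⟨⟨Matrix.diagonal d₁, diagonal_mem_unitaryGroup h₁⟩, 
    ⟨Matrix.diagonal d₁, diagonal_mem_unitaryGroup h₁⟩⁻¹ * A *
      ⟨Matrix.diagonal d₂, diagonal_mem_unitaryGroup h₂⟩⁻¹,
    ⟨Matrix.diagonal d₂, diagonal_mem_unitaryGroup h₂⟩, ?_, ?_, ?_, ?_, by group⟩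
  · exact Matrix.isDiag_diagonal d₁
  · show ((star (Matrix.diagonal d₁) * (A : Mm n)) * star (Matrix.diagonal d₂)) *ᵥ oneVec n
      = oneVec n
    rw [Matrix.star_eq_conjTranspose, Matrix.star_eq_conjTranspose,
      Matrix.diagonal_conjTranspose, Matrix.diagonal_conjTranspose,
      ← Matrix.mulVec_mulVec, ← Matrix.mulVec_mulVec]
    have hZ : Matrix.diagonal (star d₂) *ᵥ oneVec n = (starRingEnd ℂ) z • v := by
      funext j
      rw [Matrix.mulVec_diagonal]
      simp [hd₂def, oneVec, _root_.map_mul, mul_comm]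
    rw [hZ, Matrix.mulVec_smul, ← hwdef]
    funext k
    rw [Matrix.mulVec_diagonal]
    have hu1 : (starRingEnd ℂ) (w k) * w k = 1 := unimod_conj_mul (hw k)
    have hu2 : z * (starRingEnd ℂ) z = 1 := unimod_mul_conj (hv _)
    show star d₁ k * ((starRingEnd ℂ) z • w) k = oneVec n k
    simp only [Pi.star_apply, Pi.smul_apply, smul_eq_mul, hd₁def, oneVec,
      Complex.star_def, _root_.map_mul, Complex.conj_conj]
    linear_combination (z * (starRingEnd ℂ) z) * hu1 + hu2
  · exact Matrix.isDiag_diagonal d₂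
  · show Matrix.diagonal d₂ ⟨0, hn⟩ ⟨0, hn⟩ = 1
    rw [Matrix.diagonal_apply_eq]
    exact unimod_mul_conj (hv _)


lemma rhs_subset_biuni (hn : 1 ≤ n) (A : Matrix.unitaryGroup (Fin n) ℂ)
    (D₁ S D₂ : Matrix.unitaryGroup (Fin n) ℂ)
    (h₁ : (D₁ : Mm n).IsDiag) (hS : (S : Mm n) *ᵥ oneVec n = oneVec n)
    (h₂ : (D₂ : Mm n).IsDiag) (hA : A = D₁ * S * D₂) :
    A ∈ biuniSet n := by
  refine mem_biuniSet_of A (Matrix.diag (D₁ : Mm n)) (Matrix.diag (D₂ : Mm n))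
    (fun k => abs_diag_of_unitary D₁.2 h₁ k) (fun k => abs_diag_of_unitary D₂.2 h₂ k)
    (S : Mm n) hS ?_
  rw [h₁.diagonal_diag, h₂.diagonal_diag, hA]
  rfl

theorem seteq (hn : 1 ≤ n) :
    biuniSet n =
      {A : Matrix.unitaryGroup (Fin n) ℂ |
        ∃ D₁ S D₂ : Matrix.unitaryGroup (Fin n) ℂ,
          (D₁ : Matrix (Fin n) (Fin n) ℂ).IsDiag ∧
          (S : Matrix (Fin n) (Fin n) ℂ).mulVec (fun _ => 1) = (fun _ => 1) ∧
          (D₂ : Matrix (Fin n) (Fin n) ℂ).IsDiag ∧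
          (D₂ : Matrix (Fin n) (Fin n) ℂ) ⟨0, hn⟩ ⟨0, hn⟩ = 1 ∧
          A = D₁ * S * D₂} := by
  ext A
  constructor
  · intro hA
    obtain ⟨D₁, S, D₂, h1, h2, h3, h4, h5⟩ := decomp hn A hA
    exact ⟨D₁, S, D₂, h1, h2, h3, h4, h5⟩
  · rintro ⟨D₁, S, D₂, h1, h2, h3, h4, h5⟩
    exact rhs_subset_biuni hn A D₁ S D₂ h1 h2 h3 h5

lemma entry_abs_le {A : Mm n} (hA : A ∈ Matrix.unitaryGroup (Fin n) ℂ) (i j : Fin n) :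
    ‖A i j‖ ≤ 1 := by
  have h1 : (star A * A) j j = 1 := by rw [hA.1]; simp
  rw [Matrix.mul_apply] at h1
  have h2 : ∀ k, (star A) j k * A k j = (Complex.normSq (A k j) : ℂ) := by
    intro k
    rw [Matrix.star_apply, Complex.star_def, mul_comm, Complex.mul_conj]
  rw [Finset.sum_congr rfl (fun k _ => h2 k)] at h1
  have h3 : ∑ k, Complex.normSq (A k j) = 1 := by exact_mod_cast h1
  have h4 : Complex.normSq (A i j) ≤ 1 := by
    rw [← h3]
    exact Finset.single_le_sum (f := fun k => Complex.normSq (A k j))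
      (fun k _ => Complex.normSq_nonneg _) (Finset.mem_univ i)
  rw [Complex.norm_def]
  rw [show (1:ℝ) = Real.sqrt 1 by simp]
  exact Real.sqrt_le_sqrt h4

lemma isCompact_ug : IsCompact ((Matrix.unitaryGroup (Fin n) ℂ) : Set (Mm n)) := by
  have hclosed : IsClosed ((Matrix.unitaryGroup (Fin n) ℂ) : Set (Mm n)) := by
    have hset : ((Matrix.unitaryGroup (Fin n) ℂ) : Set (Mm n)) =
        {A | star A * A = 1} ∩ {A | A * star A = 1} := by
      ext A; exact ⟨fun h => ⟨h.1, h.2⟩, fun h => ⟨h.1, h.2⟩⟩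
    rw [hset]
    exact (isClosed_eq ((continuous_id.matrix_conjTranspose).matrix_mul continuous_id)
        continuous_const).inter
      (isClosed_eq (continuous_id.matrix_mul continuous_id.matrix_conjTranspose)
        continuous_const)
  have hsub : ((Matrix.unitaryGroup (Fin n) ℂ) : Set (Mm n)) ⊆
      Set.univ.pi (fun _ : Fin n => Set.univ.pi fun _ : Fin n => Metric.closedBall (0:ℂ) 1) := by
    intro A hA
    intro i _ j _
    rw [Metric.mem_closedBall, dist_zero_right]
    simpa using entry_abs_le hA i j
  exact IsCompact.of_isClosed_subset
    (isCompact_univ_pi fun _ => isCompact_univ_pi fun _ => isCompact_closedBall 0 1)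
    hclosed hsub

lemma isClosed_isDiag : IsClosed {X : Mm n | X.IsDiag} := by
  have hset : {X : Mm n | X.IsDiag} =
      ⋂ (i : Fin n), ⋂ (j : Fin n), {X : Mm n | i ≠ j → X i j = 0} := by
    ext X
    simp only [Set.mem_iInter, Set.mem_setOf_eq]
    exact ⟨fun h i j hij => h hij, fun h i j hij => h i j hij⟩
  rw [hset]
  refine isClosed_iInter fun i => isClosed_iInter fun j => ?_
  by_cases h : i = j
  · subst h
    simp
  · have : {X : Mm n | i ≠ j → X i j = 0} = {X : Mm n | X i j = 0} := by
      ext X; simp [h]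
    rw [this]
    exact isClosed_eq (continuous_id.matrix_elem i j) continuous_const

lemma isClosed_biuni (hn : 1 ≤ n) : IsClosed (biuniSet n) := by
  classical
  set UGs : Set (Mm n) := ((Matrix.unitaryGroup (Fin n) ℂ) : Set (Mm n)) with hUGs
  set K3 : Set (Mm n × Mm n × Mm n) :=
    (UGs ×ˢ UGs ×ˢ UGs) ∩
      (((fun p : Mm n × Mm n × Mm n => p.1) ⁻¹' {X | X.IsDiag}) ∩
       {p : Mm n × Mm n × Mm n | p.2.1 *ᵥ oneVec n = oneVec n} ∩
       (((fun p : Mm n × Mm n × Mm n => p.2.2) ⁻¹' {X | X.IsDiag}) ∩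
        {p : Mm n × Mm n × Mm n | p.2.2 ⟨0, hn⟩ ⟨0, hn⟩ = 1})) with hK3def
  have hK3 : IsCompact K3 := by
    refine (isCompact_ug.prod (isCompact_ug.prod isCompact_ug)).inter_right ?_
    refine IsClosed.inter (IsClosed.inter ?_ ?_) (IsClosed.inter ?_ ?_)
    · exact isClosed_isDiag.preimage continuous_fst
    · exact isClosed_eq (Continuous.matrix_mulVec (continuous_fst.comp continuous_snd)
        continuous_const) continuous_const
    · exact isClosed_isDiag.preimage (continuous_snd.comp continuous_snd)
    · exact isClosed_eq (((continuous_snd.comp continuous_snd).matrix_elem _ _)) continuous_const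
  have hC : IsCompact ((fun p : Mm n × Mm n × Mm n => p.1 * p.2.1 * p.2.2) '' K3) :=
    hK3.image ((continuous_fst.matrix_mul (continuous_fst.comp continuous_snd)).matrix_mul
      (continuous_snd.comp continuous_snd))
  have hpre : biuniSet n =
      Subtype.val ⁻¹' ((fun p : Mm n × Mm n × Mm n => p.1 * p.2.1 * p.2.2) '' K3) := by
    rw [seteq hn]
    ext A
    constructor
    · rintro ⟨D₁, S, D₂, h1, h2, h3, h4, h5⟩
      refine ⟨((D₁ : Mm n), (S : Mm n), (D₂ : Mm n)), ⟨⟨D₁.2, S.2, D₂.2⟩, ⟨⟨h1, h2⟩, h3, h4⟩⟩, ?_⟩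
      rw [h5]
      rfl
    · rintro ⟨⟨X, Y, Z⟩, ⟨⟨hX, hY, hZ⟩, ⟨⟨h1, h2⟩, h3, h4⟩⟩, hprod⟩
      refine ⟨⟨X, hX⟩, ⟨Y, hY⟩, ⟨Z, hZ⟩, h1, h2, h3, h4, ?_⟩
      exact Subtype.ext hprod.symm
  rw [hpre]
  exact hC.isClosed.preimage continuous_subtype_val

lemma isUnit_interp {R : Mm n} (hR : star R * R = 1) (hu : IsUnit (1 + R))
    {t : ℝ} (ht0 : 0 ≤ t) (ht1 : t ≤ 1) :
    IsUnit ((1 + (t:ℂ)) • (1 : Mm n) + (1 - (t:ℂ)) • R) := by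
  rcases eq_or_lt_of_le ht0 with h0 | h0
  · rw [← h0]
    simpa using hu
  · rw [← Matrix.mulVec_injective_iff_isUnit]
    have hker : ∀ u : Fin n → ℂ,
        ((1 + (t:ℂ)) • (1 : Mm n) + (1 - (t:ℂ)) • R) *ᵥ u = 0 → u = 0 := by
      intro u hu0
      rw [Matrix.add_mulVec, Matrix.smul_mulVec, Matrix.smul_mulVec,
        Matrix.one_mulVec] at hu0
      have he : (1 - (t:ℂ)) • (R *ᵥ u) = -((1 + (t:ℂ)) • u) := by
        rw [eq_neg_iff_add_eq_zero, add_comm]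
        exact hu0
      have hdot := congrArg (fun y => star y ⬝ᵥ y) he
      simp only [star_smul, smul_dotProduct, dotProduct_smul, star_neg,
        neg_dotProduct, dotProduct_neg, neg_neg, smul_eq_mul] at hdot
      rw [norm_mulVec_unitary hR] at hdot
      have hconj1 : star (1 - (t:ℂ)) = 1 - (t:ℂ) := by
        rw [Complex.star_def, map_sub, _root_.map_one, Complex.conj_ofReal]
      have hconj2 : star (1 + (t:ℂ)) = 1 + (t:ℂ) := by
        rw [Complex.star_def, map_add, _root_.map_one, Complex.conj_ofReal]
      rw [hconj1, hconj2] at hdot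
      have hc : ((1 + (t:ℂ)) * (1 + (t:ℂ)) - (1 - (t:ℂ)) * (1 - (t:ℂ))) * (star u ⬝ᵥ u) = 0 := by
        linear_combination -hdot
      have hne : ((1 + (t:ℂ)) * (1 + (t:ℂ)) - (1 - (t:ℂ)) * (1 - (t:ℂ))) ≠ 0 := by
        have : ((1 + (t:ℂ)) * (1 + (t:ℂ)) - (1 - (t:ℂ)) * (1 - (t:ℂ))) = ((4*t : ℝ) : ℂ) := by
          push_cast; ring
        rw [this]
        simp only [ne_eq, Complex.ofReal_eq_zero]
        positivity
      have := mul_eq_zero.mp hc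
      rcases this with h | h
      · exact absurd h hne
      · exact dotProduct_star_self_eq_zero.mp h
    intro x y hxy
    have : ((1 + (t:ℂ)) • (1 : Mm n) + (1 - (t:ℂ)) • R) *ᵥ (x - y) = 0 := by
      rw [Matrix.mulVec_sub, hxy, sub_self]
    have := hker (x - y) this
    exact sub_eq_zero.mp this

noncomputable def Fm (R : Mm n) (t : ℝ) : Mm n := (1 + (t:ℂ)) • 1 + (1 - (t:ℂ)) • R
noncomputable def Gm (R : Mm n) (t : ℝ) : Mm n := (1 - (t:ℂ)) • 1 + (1 + (t:ℂ)) • R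
noncomputable def cayPath (R : Mm n) (t : ℝ) : Mm n := Gm R t * (Fm R t)⁻¹

lemma conj_one_add (t : ℝ) : star (1 + (t:ℂ)) = 1 + (t:ℂ) := by
  rw [Complex.star_def, map_add, _root_.map_one, Complex.conj_ofReal]

lemma conj_one_sub (t : ℝ) : star (1 - (t:ℂ)) = 1 - (t:ℂ) := by
  rw [Complex.star_def, map_sub, _root_.map_one, Complex.conj_ofReal]

lemma isUnit_Fm {R : Mm n} (hRu : star R * R = 1) (hu : IsUnit (1 + R))
    {t : ℝ} (ht0 : 0 ≤ t) (ht1 : t ≤ 1) : IsUnit (Fm R t) :=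
  isUnit_interp hRu hu ht0 ht1

lemma isUnit_Fm_star {R : Mm n} (hRu' : R * star R = 1) (hu : IsUnit (1 + R))
    {t : ℝ} (ht0 : 0 ≤ t) (ht1 : t ≤ 1) : IsUnit (Fm (star R) t) := by
  refine isUnit_interp ?_ ?_ ht0 ht1
  · rw [star_star]; exact hRu'
  · have : (1 : Mm n) + star R = star (1 + R) := by rw [star_add, star_one]
    rw [this]
    exact hu.star

lemma Fm_conjTranspose (R : Mm n) (t : ℝ) : (Fm R t)ᴴ = Fm (star R) t := by
  rw [Fm, Fm, Matrix.conjTranspose_add, Matrix.conjTranspose_smul, Matrix.conjTranspose_smul,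
    Matrix.conjTranspose_one, conj_one_add, conj_one_sub, Matrix.star_eq_conjTranspose]

lemma Gm_conjTranspose (R : Mm n) (t : ℝ) : (Gm R t)ᴴ = Gm (star R) t := by
  rw [Gm, Gm, Matrix.conjTranspose_add, Matrix.conjTranspose_smul, Matrix.conjTranspose_smul,
    Matrix.conjTranspose_one, conj_one_add, conj_one_sub, Matrix.star_eq_conjTranspose]

lemma GG_eq_FF {R : Mm n} (hRu : star R * R = 1) (t : ℝ) :
    (Gm R t)ᴴ * Gm R t = (Fm R t)ᴴ * Fm R t := by
  rw [Gm_conjTranspose, Fm_conjTranspose]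
  simp only [Gm, Fm, Matrix.add_mul, Matrix.mul_add, smul_mul_assoc,
    mul_smul_comm, Matrix.mul_one, Matrix.one_mul, smul_smul, hRu]
  module

lemma cayPath_mem {R : Mm n} (hRu : star R * R = 1) (hRu' : R * star R = 1)
    (hu : IsUnit (1 + R)) {t : ℝ} (ht0 : 0 ≤ t) (ht1 : t ≤ 1) :
    cayPath R t ∈ Matrix.unitaryGroup (Fin n) ℂ := by
  rw [Matrix.mem_unitaryGroup_iff']
  have hFdet : IsUnit (Fm R t).det := (Matrix.isUnit_iff_isUnit_det _).mp (isUnit_Fm hRu hu ht0 ht1)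
  have hF'det : IsUnit ((Fm R t)ᴴ).det := by
    rw [Fm_conjTranspose]
    exact (Matrix.isUnit_iff_isUnit_det _).mp (isUnit_Fm_star hRu' hu ht0 ht1)
  have hstar : star (cayPath R t) = ((Fm R t)ᴴ)⁻¹ * (Gm R t)ᴴ := by
    rw [cayPath, Matrix.star_eq_conjTranspose, Matrix.conjTranspose_mul,
      Matrix.conjTranspose_nonsing_inv]
  rw [hstar, cayPath]
  calc ((Fm R t)ᴴ)⁻¹ * (Gm R t)ᴴ * (Gm R t * (Fm R t)⁻¹)
      = ((Fm R t)ᴴ)⁻¹ * ((Gm R t)ᴴ * Gm R t) * (Fm R t)⁻¹ := by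
        rw [Matrix.mul_assoc, Matrix.mul_assoc, Matrix.mul_assoc]
    _ = ((Fm R t)ᴴ)⁻¹ * ((Fm R t)ᴴ * Fm R t) * (Fm R t)⁻¹ := by rw [GG_eq_FF hRu]
    _ = (((Fm R t)ᴴ)⁻¹ * (Fm R t)ᴴ) * (Fm R t * (Fm R t)⁻¹) := by
        rw [Matrix.mul_assoc, Matrix.mul_assoc, Matrix.mul_assoc]
    _ = 1 := by rw [Matrix.nonsing_inv_mul _ hF'det, Matrix.mul_nonsing_inv _ hFdet, Matrix.one_mul]

lemma cayPath_zero {R : Mm n} (hu : IsUnit (1 + R)) : cayPath R 0 = 1 := by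
  have h : Fm R 0 = 1 + R := by simp [Fm]
  have h2 : Gm R 0 = 1 + R := by simp [Gm]
  rw [cayPath, h, h2, Matrix.mul_nonsing_inv _ ((Matrix.isUnit_iff_isUnit_det _).mp hu)]

lemma cayPath_one (R : Mm n) : cayPath R 1 = R := by
  have h : Fm R 1 = (2:ℂ) • 1 := by
    rw [Fm]; norm_num
  have h2 : Gm R 1 = (2:ℂ) • R := by
    rw [Gm]; norm_num
  have hinv : (Fm R 1)⁻¹ = (2⁻¹:ℂ) • (1 : Mm n) := by
    rw [h]
    apply Matrix.inv_eq_right_inv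
    rw [smul_mul_assoc, mul_smul_comm, smul_smul, Matrix.one_mul]
    norm_num
  rw [cayPath, h2, hinv, smul_mul_assoc, mul_smul_comm, smul_smul, Matrix.mul_one]
  norm_num

lemma cayPath_mulVec_oneVec {R : Mm n} (hRu : star R * R = 1) (hu : IsUnit (1 + R))
    (hone : R *ᵥ oneVec n = oneVec n) {t : ℝ} (ht0 : 0 ≤ t) (ht1 : t ≤ 1) :
    cayPath R t *ᵥ oneVec n = oneVec n := by
  have hFdet := (Matrix.isUnit_iff_isUnit_det _).mp (isUnit_Fm hRu hu ht0 ht1)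
  have hFone : Fm R t *ᵥ oneVec n = (2:ℂ) • oneVec n := by
    rw [Fm, Matrix.add_mulVec, Matrix.smul_mulVec, Matrix.smul_mulVec,
      Matrix.one_mulVec, hone, ← add_smul]
    norm_num
  have hFinv : (Fm R t)⁻¹ *ᵥ oneVec n = (2⁻¹:ℂ) • oneVec n := by
    have h1 : (Fm R t)⁻¹ *ᵥ (Fm R t *ᵥ oneVec n) = oneVec n := by
      rw [Matrix.mulVec_mulVec, Matrix.nonsing_inv_mul _ hFdet, Matrix.one_mulVec]
    rw [hFone, Matrix.mulVec_smul] at h1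
    calc (Fm R t)⁻¹ *ᵥ oneVec n = (2⁻¹:ℂ) • ((2:ℂ) • ((Fm R t)⁻¹ *ᵥ oneVec n)) := by
          rw [smul_smul]; norm_num
      _ = (2⁻¹:ℂ) • oneVec n := by rw [h1]
  rw [cayPath, ← Matrix.mulVec_mulVec, hFinv, Matrix.mulVec_smul, Gm, Matrix.add_mulVec,
    Matrix.smul_mulVec, Matrix.smul_mulVec, Matrix.one_mulVec, hone, ← add_smul,
    smul_smul]
  have : (2⁻¹:ℂ) * (1 - (t:ℂ) + (1 + (t:ℂ))) = 1 := by ring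
  rw [this, one_smul]

lemma continuous_cayPath {R : Mm n} (hRu : star R * R = 1) (hu : IsUnit (1 + R)) :
    Continuous fun t : unitInterval => cayPath R (t : ℝ) := by
  have hFcont : Continuous fun t : unitInterval => Fm R (t : ℝ) := by
    exact ((continuous_const.add (Complex.continuous_ofReal.comp
        continuous_subtype_val)).smul continuous_const).add
      ((continuous_const.sub (Complex.continuous_ofReal.comp
        continuous_subtype_val)).smul continuous_const)
  have hGcont : Continuous fun t : unitInterval => Gm R (t : ℝ) := by
    exact ((continuous_const.sub (Complex.continuous_ofReal.comp
        continuous_subtype_val)).smul continuous_const).add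
      ((continuous_const.add (Complex.continuous_ofReal.comp
        continuous_subtype_val)).smul continuous_const)
  have hdet : Continuous fun t : unitInterval => (Fm R (t:ℝ)).det := hFcont.matrix_det
  have hdetne : ∀ t : unitInterval, (Fm R (t:ℝ)).det ≠ 0 := fun t =>
    ((Matrix.isUnit_iff_isUnit_det _).mp (isUnit_Fm hRu hu t.2.1 t.2.2)).ne_zero
  have heq : (fun t : unitInterval => cayPath R (t:ℝ))
      = fun t : unitInterval => ((Fm R (t:ℝ)).det)⁻¹ • (Gm R (t:ℝ) * (Fm R (t:ℝ)).adjugate) := by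
    funext t
    rw [cayPath, Matrix.inv_def, Ring.inverse_eq_inv, mul_smul_comm]
  rw [heq]
  exact (hdet.inv₀ hdetne).smul (hGcont.matrix_mul hFcont.matrix_adjugate)

def Gset (n : ℕ) : Set (Matrix.unitaryGroup (Fin n) ℂ) :=
  {S | (S : Mm n) *ᵥ oneVec n = oneVec n}

lemma one_mem_Gset : (1 : Matrix.unitaryGroup (Fin n) ℂ) ∈ Gset n := by
  show ((1 : Matrix.unitaryGroup (Fin n) ℂ) : Mm n) *ᵥ oneVec n = oneVec n
  rw [Matrix.UnitaryGroup.one_val, Matrix.one_mulVec]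

lemma star_mulVec_oneVec {R : Matrix.unitaryGroup (Fin n) ℂ} (hR : R ∈ Gset n) :
    star (R : Mm n) *ᵥ oneVec n = oneVec n := by
  have hR' : (R : Mm n) *ᵥ oneVec n = oneVec n := hR
  conv_lhs => rw [← hR']
  rw [Matrix.mulVec_mulVec, R.2.1, Matrix.one_mulVec]

lemma cayley_joinedIn (R : Matrix.unitaryGroup (Fin n) ℂ) (hR : R ∈ Gset n)
    (hu : IsUnit (1 + (R : Mm n))) : JoinedIn (Gset n) 1 R := by
  have hRu : star (R : Mm n) * (R : Mm n) = 1 := R.2.1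
  have hRu' : (R : Mm n) * star (R : Mm n) = 1 := R.2.2
  have hmem : ∀ t : unitInterval, cayPath (R : Mm n) (t:ℝ) ∈ Matrix.unitaryGroup (Fin n) ℂ :=
    fun t => cayPath_mem hRu hRu' hu t.2.1 t.2.2
  let p : Path (1 : Matrix.unitaryGroup (Fin n) ℂ) R :=
    { toFun := fun t => ⟨cayPath (R : Mm n) (t:ℝ), hmem t⟩
      continuous_toFun := (continuous_cayPath hRu hu).subtype_mk _
      source' := Subtype.ext (cayPath_zero hu)
      target' := Subtype.ext (cayPath_one _) }
  refine ⟨p, fun t => ?_⟩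
  show (cayPath (R : Mm n) (t:ℝ)) *ᵥ oneVec n = oneVec n
  exact cayPath_mulVec_oneVec hRu hu hR t.2.1 t.2.2

lemma joinedIn_mul_left {T R : Matrix.unitaryGroup (Fin n) ℂ} (hT : T ∈ Gset n)
    (h : JoinedIn (Gset n) 1 R) : JoinedIn (Gset n) T (T * R) := by
  obtain ⟨p, hp⟩ := h
  let q : Path T (T * R) :=
    { toFun := fun t => T * p t
      continuous_toFun := by
        refine Continuous.subtype_mk ?_ _
        exact continuous_const.matrix_mul (continuous_subtype_val.comp p.continuous)
      source' := by show T * p 0 = T; rw [p.source, mul_one]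
      target' := by show T * p 1 = T * R; rw [p.target] }
  refine ⟨q, fun t => ?_⟩
  show ((T * p t : Matrix.unitaryGroup (Fin n) ℂ) : Mm n) *ᵥ oneVec n = oneVec n
  rw [Matrix.UnitaryGroup.mul_val, ← Matrix.mulVec_mulVec]
  have h1 : ((p t : Matrix.unitaryGroup (Fin n) ℂ) : Mm n) *ᵥ oneVec n = oneVec n := hp t
  rw [h1]
  exact hT

noncomputable def Pj (n : ℕ) : Mm n := ((n:ℂ))⁻¹ • Matrix.of (fun _ _ => 1)

lemma ncast_ne (hn : 0 < n) : ((n:ℂ)) ≠ 0 := Nat.cast_ne_zero.mpr hn.ne'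

lemma Pj_conjTranspose : (Pj n)ᴴ = Pj n := by
  ext i j
  simp [Pj, Matrix.conjTranspose_apply]

lemma Pj_mul_Pj (hn : 0 < n) : Pj n * Pj n = Pj n := by
  ext i j
  rw [Matrix.mul_apply]
  have h : ∀ k, Pj n i k * Pj n k j = (n:ℂ)⁻¹ * (n:ℂ)⁻¹ := by
    intro k; simp [Pj]
  rw [Finset.sum_congr rfl fun k _ => h k, Finset.sum_const, Finset.card_univ, Fintype.card_fin,
    nsmul_eq_mul]
  have : Pj n i j = (n:ℂ)⁻¹ := by simp [Pj]
  rw [this]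
  field_simp

lemma Pj_mulVec_oneVec (hn : 0 < n) : Pj n *ᵥ oneVec n = oneVec n := by
  funext i
  simp only [Matrix.mulVec, dotProduct, oneVec, mul_one]
  have h : ∀ k : Fin n, Pj n i k = (n:ℂ)⁻¹ := by intro k; simp [Pj]
  rw [Finset.sum_congr rfl fun k _ => h k, Finset.sum_const, Finset.card_univ, Fintype.card_fin,
    nsmul_eq_mul]
  show (n:ℂ) * ((n:ℂ))⁻¹ = 1
  exact mul_inv_cancel₀ (ncast_ne hn)

lemma star_mulVec_one_mat {S : Mm n} (hSu : star S * S = 1)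
    (hrow : S *ᵥ oneVec n = oneVec n) : star S *ᵥ oneVec n = oneVec n := by
  conv_lhs => rw [← hrow]
  rw [Matrix.mulVec_mulVec, hSu, Matrix.one_mulVec]

lemma col_sum_one {S : Mm n} (hSu : star S * S = 1)
    (hrow : S *ᵥ oneVec n = oneVec n) (j : Fin n) : ∑ k, S k j = 1 := by
  have h := congrFun (star_mulVec_one_mat hSu hrow) j
  simp only [Matrix.mulVec, dotProduct, oneVec, mul_one, Matrix.star_apply] at h
  have h2 := congrArg (starRingEnd ℂ) h
  rw [map_sum, _root_.map_one] at h2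
  simpa using h2

lemma Pj_mul_of_colsum {S : Mm n} (hcol : ∀ j, ∑ k, S k j = 1) : Pj n * S = Pj n := by
  ext i j
  rw [Matrix.mul_apply]
  have h : ∀ k, Pj n i k * S k j = (n:ℂ)⁻¹ * S k j := by
    intro k; simp [Pj]
  rw [Finset.sum_congr rfl fun k _ => h k, ← Finset.mul_sum, hcol j]
  simp [Pj]

open Polynomial in
lemma exists_good_z (hn : 0 < n) {S : Mm n} (hSu : star S * S = 1)
    (hrow : S *ᵥ oneVec n = oneVec n) :
    ∃ z : ℂ, ‖z‖ = 1 ∧ z ≠ -1 ∧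
      IsUnit (S + (z • (1 : Mm n) + (1 - z) • Pj n)) := by
  classical
  have hcol := col_sum_one hSu hrow
  -- the polynomial
  set Mq : Matrix (Fin n) (Fin n) ℂ[X] := Matrix.of (fun i j =>
    C (S i j) + X * C ((1 : Mm n) i j) + (1 - X) * C (Pj n i j)) with hMq
  set q : ℂ[X] := Mq.det with hq
  have heval : ∀ z : ℂ, q.eval z = (S + (z • (1 : Mm n) + (1 - z) • Pj n)).det := by
    intro z
    have h1 : (evalRingHom z) q = ((Mq.map (evalRingHom z))).det := RingHom.map_det _ _
    have h2 : Mq.map (evalRingHom z) = S + (z • (1 : Mm n) + (1 - z) • Pj n) := by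
      ext i j
      simp [hMq, Matrix.map_apply, Matrix.add_apply, Matrix.smul_apply, smul_eq_mul]
      ring
    rw [← h2]
    exact h1
  -- the matrix at z = 2 is invertible
  have hunit2 : IsUnit (S + ((2:ℂ) • (1 : Mm n) + ((1:ℂ) - 2) • Pj n)) := by
    rw [← Matrix.mulVec_injective_iff_isUnit]
    have hker : ∀ u : Fin n → ℂ,
        (S + ((2:ℂ) • (1 : Mm n) + ((1:ℂ) - 2) • Pj n)) *ᵥ u = 0 → u = 0 := by
      intro u hu0
      have hPju : Pj n *ᵥ u = 0 := by
        have h1 : Pj n *ᵥ ((S + ((2:ℂ) • (1 : Mm n) + ((1:ℂ) - 2) • Pj n)) *ᵥ u) = 0 := by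
          rw [hu0, Matrix.mulVec_zero]
        rw [Matrix.mulVec_mulVec] at h1
        have h2 : Pj n * (S + ((2:ℂ) • (1 : Mm n) + ((1:ℂ) - 2) • Pj n)) = (2:ℂ) • Pj n := by
          rw [Matrix.mul_add, Matrix.mul_add, mul_smul_comm, mul_smul_comm, Matrix.mul_one,
            Pj_mul_of_colsum hcol, Pj_mul_Pj hn]
          module
        rw [h2, Matrix.smul_mulVec] at h1
        have := smul_eq_zero.mp h1
        rcases this with h | h
        · norm_num at h
        · exact h
      have hSu2 : S *ᵥ u = -((2:ℂ) • u) := by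
        have h1 : S *ᵥ u + ((2:ℂ) • u + ((1:ℂ) - 2) • (Pj n *ᵥ u)) = 0 := by
          rw [Matrix.add_mulVec, Matrix.add_mulVec, Matrix.smul_mulVec,
            Matrix.smul_mulVec, Matrix.one_mulVec] at hu0
          exact hu0
        rw [hPju, smul_zero, add_zero] at h1
        exact eq_neg_of_add_eq_zero_left h1
      have hdot : star (S *ᵥ u) ⬝ᵥ (S *ᵥ u) = star u ⬝ᵥ u := norm_mulVec_unitary hSu u
      rw [hSu2] at hdot
      simp only [star_neg, star_smul, neg_dotProduct, dotProduct_neg,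
        smul_dotProduct, dotProduct_smul, neg_neg, smul_eq_mul] at hdot
      have hstar2 : star (2:ℂ) = 2 := by
        rw [Complex.star_def, Complex.conj_eq_iff_re]
        norm_num
      rw [hstar2] at hdot
      have hc : ((3:ℂ)) * (star u ⬝ᵥ u) = 0 := by linear_combination hdot
      have := mul_eq_zero.mp hc
      rcases this with h | h
      · norm_num at h
      · exact dotProduct_star_self_eq_zero.mp h
    intro x y hxy
    have h0 : (S + ((2:ℂ) • (1 : Mm n) + ((1:ℂ) - 2) • Pj n)) *ᵥ (x - y) = 0 := by
      rw [Matrix.mulVec_sub, hxy, sub_self]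
    exact sub_eq_zero.mp (hker (x - y) h0)
  have hqne : q ≠ 0 := by
    intro h
    have := heval 2
    rw [h, Polynomial.eval_zero] at this
    exact ((Matrix.isUnit_iff_isUnit_det _).mp hunit2).ne_zero this.symm
  -- choose z on the circle avoiding roots
  have hden : ∀ s : ℝ, (1:ℂ) - s * Complex.I ≠ 0 := by
    intro s h
    have := congrArg Complex.re h
    simp at this
  have hnum : ∀ s : ℝ, (1:ℂ) + s * Complex.I ≠ 0 := by
    intro s h
    have := congrArg Complex.re h
    simp at this
  set w : ℝ → ℂ := fun s => (1 + s * Complex.I) / (1 - s * Complex.I) with hw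
  have hwinj : Function.Injective w := by
    intro s1 s2 h
    rw [hw] at h
    simp only at h
    rw [div_eq_div_iff (hden s1) (hden s2)] at h
    have h3 : (s1:ℂ) * Complex.I = (s2:ℂ) * Complex.I := by linear_combination h / 2
    have h4 : (s1:ℂ) = s2 := mul_right_cancel₀ Complex.I_ne_zero h3
    exact_mod_cast h4
  have hfin : (w ⁻¹' {z | z ∈ q.roots}).Finite := by
    apply Set.Finite.preimage hwinj.injOn
    have : {z | z ∈ q.roots} = ↑q.roots.toFinset := by ext z; simp
    rw [this]
    exact q.roots.toFinset.finite_toSet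
  obtain ⟨s, hs⟩ := (Set.infinite_univ (α := ℝ)).diff hfin |>.nonempty
  have hsnot : w s ∉ q.roots := hs.2
  refine ⟨w s, ?_, ?_, ?_⟩
  · have hconj : ((1:ℂ) - s * Complex.I) = (starRingEnd ℂ) (1 + s * Complex.I) := by
      rw [map_add, _root_.map_one, _root_.map_mul, Complex.conj_ofReal, Complex.conj_I]
      ring
    rw [hw]
    simp only
    rw [norm_div, hconj, Complex.norm_conj]
    exact div_self (norm_ne_zero_iff.mpr (hnum s))
  · intro h
    rw [hw] at h
    simp only at h
    rw [div_eq_iff (hden s)] at h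
    have : (1:ℂ) = -1 := by linear_combination h
    norm_num at this
  · rw [Matrix.isUnit_iff_isUnit_det, isUnit_iff_ne_zero, ← heval]
    intro h
    exact hsnot ((Polynomial.mem_roots hqne).mpr h)

lemma unimod_conj_mul' {z : ℂ} (h : ‖z‖ = 1) : (starRingEnd ℂ) z * z = 1 := by
  have := Complex.normSq_eq_norm_sq z
  rw [mul_comm, Complex.mul_conj]
  rw [h] at this
  norm_num [this]

lemma stab_joined (hn : 0 < n) (S : Matrix.unitaryGroup (Fin n) ℂ) (hS : S ∈ Gset n) :
    JoinedIn (Gset n) 1 S := by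
  have hSu : star (S : Mm n) * (S : Mm n) = 1 := S.2.1
  have hSone : (S : Mm n) *ᵥ oneVec n = oneVec n := hS
  obtain ⟨z, hz1, hz2, hz3⟩ := exists_good_z hn hSu hSone
  have hstarz : star z * z = 1 := unimod_conj_mul' hz1
  set Tm : Mm n := z • (1 : Mm n) + (1 - z) • Pj n with hTm
  have hstarT : star Tm = star z • (1 : Mm n) + (1 - star z) • Pj n := by
    rw [hTm, Matrix.star_eq_conjTranspose, Matrix.conjTranspose_add, Matrix.conjTranspose_smul,
      Matrix.conjTranspose_smul, Matrix.conjTranspose_one, Pj_conjTranspose, star_sub, star_one]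
  have hTunitary : Tm ∈ Matrix.unitaryGroup (Fin n) ℂ := by
    rw [Matrix.mem_unitaryGroup_iff']
    rw [hstarT, hTm]
    simp only [Matrix.add_mul, Matrix.mul_add, smul_mul_assoc, mul_smul_comm, Matrix.mul_one,
      Matrix.one_mul, smul_smul, Pj_mul_Pj hn]
    match_scalars
    · linear_combination hstarz
    · linear_combination -hstarz
  have hT1 : Tm *ᵥ oneVec n = oneVec n := by
    rw [hTm, Matrix.add_mulVec, Matrix.smul_mulVec, Matrix.smul_mulVec,
      Matrix.one_mulVec, Pj_mulVec_oneVec hn, ← add_smul]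
    have : z + (1 - z) = 1 := by ring
    rw [this, one_smul]
  set T : Matrix.unitaryGroup (Fin n) ℂ := ⟨Tm, hTunitary⟩ with hT
  have hTmem : T ∈ Gset n := hT1
  have hu1 : IsUnit ((1 : Mm n) + Tm) := by
    rw [← Matrix.mulVec_injective_iff_isUnit]
    have hker : ∀ u : Fin n → ℂ, ((1 : Mm n) + Tm) *ᵥ u = 0 → u = 0 := by
      intro u hu0
      have hexp : (1 + z) • u + (1 - z) • (Pj n *ᵥ u) = 0 := by
        rw [hTm, Matrix.add_mulVec, Matrix.add_mulVec, Matrix.smul_mulVec,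
          Matrix.smul_mulVec, Matrix.one_mulVec] at hu0
        rw [add_smul, one_smul, add_assoc]
        exact hu0
      have hPju : Pj n *ᵥ u = 0 := by
        have h1 : Pj n *ᵥ (((1 : Mm n) + Tm) *ᵥ u) = 0 := by rw [hu0, Matrix.mulVec_zero]
        rw [Matrix.mulVec_mulVec] at h1
        have h2 : Pj n * ((1 : Mm n) + Tm) = (2:ℂ) • Pj n := by
          rw [hTm, Matrix.mul_add, Matrix.mul_one, Matrix.mul_add, mul_smul_comm, mul_smul_comm,
            Matrix.mul_one, Pj_mul_Pj hn]
          match_scalars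
          ring
        rw [h2, Matrix.smul_mulVec] at h1
        rcases smul_eq_zero.mp h1 with h | h
        · norm_num at h
        · exact h
      rw [hPju, smul_zero, add_zero] at hexp
      rcases smul_eq_zero.mp hexp with h | h
      · exfalso
        apply hz2
        linear_combination h
      · exact h
    intro x y hxy
    have h0 : ((1 : Mm n) + Tm) *ᵥ (x - y) = 0 := by rw [Matrix.mulVec_sub, hxy, sub_self]
    exact sub_eq_zero.mp (hker (x - y) h0)
  have J1 : JoinedIn (Gset n) 1 T := cayley_joinedIn T hTmem hu1
  set R₂ : Matrix.unitaryGroup (Fin n) ℂ := T⁻¹ * S with hR₂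
  have hR₂coe : (R₂ : Mm n) = star Tm * (S : Mm n) := by
    rw [hR₂, Matrix.UnitaryGroup.mul_val, Matrix.UnitaryGroup.inv_val]
  have hR₂mem : R₂ ∈ Gset n := by
    show (R₂ : Mm n) *ᵥ oneVec n = oneVec n
    rw [hR₂coe, ← Matrix.mulVec_mulVec, hSone]
    exact star_mulVec_one_mat hTunitary.1 hT1
  have hu2 : IsUnit ((1 : Mm n) + (R₂ : Mm n)) := by
    have hfact : (1 : Mm n) + (R₂ : Mm n) = star Tm * (Tm + (S : Mm n)) := by
      rw [hR₂coe, Matrix.mul_add]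
      have : star Tm * Tm = 1 := hTunitary.1
      rw [this]
    rw [hfact]
    have hTisUnit : IsUnit Tm := ⟨⟨Tm, star Tm, hTunitary.2, hTunitary.1⟩, rfl⟩
    refine hTisUnit.star.mul ?_
    rw [add_comm]
    exact hz3
  have J2 : JoinedIn (Gset n) 1 R₂ := cayley_joinedIn R₂ hR₂mem hu2
  have J2' : JoinedIn (Gset n) T (T * R₂) := joinedIn_mul_left hTmem J2
  have hTR : T * R₂ = S := by
    rw [hR₂, mul_inv_cancel_left]
  rw [hTR] at J2'
  exact J1.trans J2'

noncomputable def dPath (d : Fin n → ℂ) (t : ℝ) : Fin n → ℂ :=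
  fun k => Complex.exp (((t * (d k).arg : ℝ) : ℂ) * Complex.I)

lemma dPath_abs (d : Fin n → ℂ) (t : ℝ) (k : Fin n) : ‖dPath d t k‖ = 1 :=
  Complex.norm_exp_ofReal_mul_I _

lemma dPath_zero (d : Fin n → ℂ) : dPath d 0 = oneVec n := by
  funext k
  simp [dPath, oneVec]

lemma dPath_one {d : Fin n → ℂ} (hd : ∀ k, ‖d k‖ = 1) : dPath d 1 = d := by
  funext k
  have := Complex.norm_mul_exp_arg_mul_I (d k)
  rw [hd k] at this
  simpa [dPath] using this

lemma continuous_dPath_diag (d : Fin n → ℂ) :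
    Continuous fun t : unitInterval => Matrix.diagonal (dPath d (t : ℝ)) := by
  refine Continuous.matrix_diagonal ?_
  refine continuous_pi fun k => ?_
  exact Complex.continuous_exp.comp ((Complex.continuous_ofReal.comp
    (continuous_subtype_val.mul continuous_const)).mul continuous_const)

lemma one_mem_biuni : (1 : Matrix.unitaryGroup (Fin n) ℂ) ∈ biuniSet n := by
  refine ⟨fun _ => 1, fun k => by simp, fun k => ?_⟩
  have h : ((1 : Matrix.unitaryGroup (Fin n) ℂ) : Mm n).mulVec (fun _ => (1:ℂ)) = fun _ => (1:ℂ) := by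
    rw [Matrix.UnitaryGroup.one_val, Matrix.one_mulVec]
  rw [h]
  simp

lemma isPathConnected_biuni (hn : 1 ≤ n) : IsPathConnected (biuniSet n) := by
  refine ⟨1, one_mem_biuni, ?_⟩
  intro A hA
  obtain ⟨D₁, S, D₂, h1, h2, h3, _h4, h5⟩ := decomp hn A hA
  have hd₁ : ∀ k, ‖Matrix.diag (D₁ : Mm n) k‖ = 1 :=
    fun k => abs_diag_of_unitary D₁.2 h1 k
  have hd₂ : ∀ k, ‖Matrix.diag (D₂ : Mm n) k‖ = 1 :=
    fun k => abs_diag_of_unitary D₂.2 h3 k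
  obtain ⟨σ, hσ⟩ := stab_joined (by omega : 0 < n) S h2
  have hmem : ∀ t : unitInterval,
      Matrix.diagonal (dPath (Matrix.diag (D₁ : Mm n)) (t:ℝ)) *
        ((σ t : Matrix.unitaryGroup (Fin n) ℂ) : Mm n) *
        Matrix.diagonal (dPath (Matrix.diag (D₂ : Mm n)) (t:ℝ)) ∈ Matrix.unitaryGroup (Fin n) ℂ :=
    fun t => mul_mem (mul_mem (diagonal_mem_unitaryGroup (fun k => dPath_abs _ _ k)) (σ t).2)
      (diagonal_mem_unitaryGroup (fun k => dPath_abs _ _ k))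
  let γ : Path (1 : Matrix.unitaryGroup (Fin n) ℂ) A :=
    { toFun := fun t => ⟨_, hmem t⟩
      continuous_toFun := by
        refine Continuous.subtype_mk ?_ _
        exact ((continuous_dPath_diag _).matrix_mul
          (continuous_subtype_val.comp σ.continuous)).matrix_mul (continuous_dPath_diag _)
      source' := by
        refine Subtype.ext ?_
        show Matrix.diagonal (dPath _ ((0:unitInterval):ℝ)) * ((σ 0 : _) : Mm n) *
          Matrix.diagonal (dPath _ ((0:unitInterval):ℝ)) =
          ((1 : Matrix.unitaryGroup (Fin n) ℂ) : Mm n)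
        rw [show ((0:unitInterval):ℝ) = 0 from rfl, dPath_zero, dPath_zero, σ.source]
        rw [show (Matrix.diagonal (oneVec n) : Mm n) = 1 from Matrix.diagonal_one,
          Matrix.UnitaryGroup.one_val, Matrix.one_mul, Matrix.mul_one]
      target' := by
        refine Subtype.ext ?_
        show Matrix.diagonal (dPath _ ((1:unitInterval):ℝ)) * ((σ 1 : _) : Mm n) *
          Matrix.diagonal (dPath _ ((1:unitInterval):ℝ)) = (A : Mm n)
        rw [show ((1:unitInterval):ℝ) = 1 from rfl, dPath_one hd₁, dPath_one hd₂, σ.target,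
          h1.diagonal_diag, h3.diagonal_diag, h5]
        rfl }
  refine ⟨γ, fun t => ?_⟩
  refine mem_biuniSet_of (γ t) (dPath (Matrix.diag (D₁ : Mm n)) (t:ℝ))
    (dPath (Matrix.diag (D₂ : Mm n)) (t:ℝ)) (fun k => dPath_abs _ _ k) (fun k => dPath_abs _ _ k)
    ((σ t : Matrix.unitaryGroup (Fin n) ℂ) : Mm n) (hσ t) rfl

end BiuniAux

/-- `𝓑ₙ` is exactly the set of products `D₁·S·D₂` (with `D₁` unitary diagonal,
`S` unitary fixing the all-ones vector, `D₂` unitary diagonal with first diagonal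
entry `1`); in particular it is closed and path-connected in `U(n)`. -/
theorem biuniSet_eq_products_and_closed_pathConnected (n : ℕ) (hn : 1 ≤ n) :
    biuniSet n =
      {A : Matrix.unitaryGroup (Fin n) ℂ |
        ∃ D₁ S D₂ : Matrix.unitaryGroup (Fin n) ℂ,
          (D₁ : Matrix (Fin n) (Fin n) ℂ).IsDiag ∧
          (S : Matrix (Fin n) (Fin n) ℂ).mulVec (fun _ => 1) = (fun _ => 1) ∧
          (D₂ : Matrix (Fin n) (Fin n) ℂ).IsDiag ∧
          (D₂ : Matrix (Fin n) (Fin n) ℂ) ⟨0, hn⟩ ⟨0, hn⟩ = 1 ∧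
          A = D₁ * S * D₂} ∧
    IsClosed (biuniSet n) ∧ IsPathConnected (biuniSet n) :=
  ⟨BiuniAux.seteq hn, BiuniAux.isClosed_biuni hn, BiuniAux.isPathConnected_biuni hn⟩
end

section
/- Let n ≥ 1 and let 𝓑ₙ denote the set of n×n unitary matrices A that possess a biunimodular vector. Then 𝓑ₙ has nonempty interior in the unitary group U(n) (with the subspace topology of U(n) inside the space of n×n complex matrices). -/
open Matrix Complex Finset

noncomputable section

namespace BiuniAux

def gACoef : ℂ := (1 + Complex.I) / 2

lemma gACoef_add_conj : gACoef + (starRingEnd ℂ) gACoef = 1 := by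
  simp [gACoef, Complex.ext_iff, Complex.add_im, Complex.div_re, Complex.div_im]
  norm_num

lemma gACoef_mul_conj : gACoef * (starRingEnd ℂ) gACoef = 1/2 := by
  rw [Complex.mul_conj]
  simp [gACoef, Complex.ext_iff, Complex.normSq_apply, Complex.div_re, Complex.div_im]
  norm_num

lemma gACoef_im : gACoef.im = 1/2 := by simp [gACoef]

variable (n : ℕ)

/-- elementary 2x2 "gate" acting on coordinates k, k+1 -/
def gate (k : ℕ) : Matrix (Fin n) (Fin n) ℂ :=
  if h : k + 1 < n then
    1 - gACoef • (Matrix.single ⟨k, Nat.lt_of_succ_lt h⟩ ⟨k, Nat.lt_of_succ_lt h⟩ 1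
      + Matrix.single ⟨k+1, h⟩ ⟨k+1, h⟩ 1
      - Matrix.single ⟨k, Nat.lt_of_succ_lt h⟩ ⟨k+1, h⟩ 1
      - Matrix.single ⟨k+1, h⟩ ⟨k, Nat.lt_of_succ_lt h⟩ 1)
  else 1

lemma gate_mul_apply (k : ℕ) (h : k + 1 < n) (M : Matrix (Fin n) (Fin n) ℂ) (i j : Fin n) :
    (gate n k * M) i j = M i j
      - gACoef * ((if (i:ℕ) = k then 1 else 0) - (if (i:ℕ) = k + 1 then 1 else 0))
        * (M ⟨k, Nat.lt_of_succ_lt h⟩ j - M ⟨k+1, h⟩ j) := by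
  set a : Fin n := ⟨k, Nat.lt_of_succ_lt h⟩
  set b : Fin n := ⟨k+1, h⟩
  have hab : a ≠ b := by simp [a, b, Fin.ext_iff]
  rw [gate, dif_pos h]
  rw [sub_mul, one_mul, smul_mul_assoc]
  rw [Matrix.sub_apply, Matrix.smul_apply]
  rw [sub_mul, sub_mul, add_mul]
  have hia : ((i:ℕ) = k) ↔ i = a := by simp [a, Fin.ext_iff]
  have hib : ((i:ℕ) = k+1) ↔ i = b := by simp [b, Fin.ext_iff]
  simp only [show (⟨k, Nat.lt_of_succ_lt h⟩ : Fin n) = a from rfl, show (⟨k+1, h⟩ : Fin n) = b from rfl]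
  have haa : (a:ℕ) = k := rfl
  have hbb : (b:ℕ) = k + 1 := rfl
  by_cases h1 : i = a
  · have hak : ¬((a:ℕ) = k + 1) := by simp [a]
    simp [h1, hab, hab.symm, Matrix.sub_apply, Matrix.add_apply, hak, hia, hib, Matrix.single_mul_apply_same, Matrix.single_mul_apply_of_ne, haa, hbb]
    try ring
  · by_cases h2 : i = b
    · have hbk : ¬((b:ℕ) = k) := by simp [b]
      simp [h1, h2, hab, hab.symm, Matrix.sub_apply, Matrix.add_apply, hbk, hia, hib, Matrix.single_mul_apply_same, Matrix.single_mul_apply_of_ne, haa, hbb]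
      try ring
    · simp [h1, h2, Ne.symm h1, Ne.symm h2, hia, hib, Matrix.sub_apply, Matrix.add_apply, Matrix.single_mul_apply_same, Matrix.single_mul_apply_of_ne, haa, hbb]


lemma stdCT (p q : Fin n) : (Matrix.single p q (1:ℂ))ᴴ = Matrix.single q p 1 := by
  ext i j
  simp [Matrix.conjTranspose_apply, Matrix.single, Matrix.of_apply,
    apply_ite (starRingEnd ℂ), and_comm]

lemma gate_mem (k : ℕ) : gate n k ∈ Matrix.unitaryGroup (Fin n) ℂ := by
  rw [gate]
  split_ifs with h
  · set a : Fin n := ⟨k, Nat.lt_of_succ_lt h⟩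
    set b : Fin n := ⟨k+1, h⟩
    have hab : a ≠ b := by simp [a, b, Fin.ext_iff]
    set Q : Matrix (Fin n) (Fin n) ℂ :=
      Matrix.single a a 1 + Matrix.single b b 1 - Matrix.single a b 1 - Matrix.single b a 1
      with hQdef
    have hQH : star Q = Q := by
      rw [Matrix.star_eq_conjTranspose, hQdef, Matrix.conjTranspose_sub,
        Matrix.conjTranspose_sub, Matrix.conjTranspose_add, stdCT, stdCT, stdCT, stdCT]
      abel
    have hz1 : ∀ (i l : Fin n) (c d : ℂ),
        Matrix.single i b c * Matrix.single a l d = 0 := fun i l c d =>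
      Matrix.single_mul_single_of_ne c i b a (Ne.symm hab) d
    have hz2 : ∀ (i l : Fin n) (c d : ℂ),
        Matrix.single i a c * Matrix.single b l d = 0 := fun i l c d =>
      Matrix.single_mul_single_of_ne c i a b hab d
    have hQ2 : Q * Q = Q + Q := by
      simp only [hQdef, add_mul, mul_add, sub_mul, mul_sub,
        Matrix.single_mul_single_same, hz1, hz2, mul_one]
      abel
    have expand : ∀ c d : ℂ, c + d = 1 → c * d = 1/2 →
        (1 - c • Q) * (1 - d • Q) = 1 := by
      intro c d hcd hm
      have e1 : (1 - c • Q) * (1 - d • Q) = 1 - (c • Q + d • Q) + (c*d) • (Q*Q) := by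
        simp only [sub_mul, mul_sub, mul_one, one_mul, smul_mul_smul_comm]
        abel
      rw [e1, hQ2, smul_add, ← add_smul, ← add_smul, hcd, hm]
      have h12 : (1/2 + 1/2 : ℂ) = 1 := by norm_num
      rw [h12, one_smul]
      abel
    have hstar : star (1 - gACoef • Q) = 1 - (starRingEnd ℂ) gACoef • Q := by
      rw [star_sub, star_one, star_smul, hQH]
      rfl
    refine Unitary.mem_iff.mpr ⟨?_, ?_⟩
    · rw [hstar]
      refine expand _ _ ?_ ?_
      · rw [add_comm]; exact gACoef_add_conj
      · rw [mul_comm]; exact gACoef_mul_conj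
    · rw [hstar]
      exact expand _ _ gACoef_add_conj gACoef_mul_conj
  · exact one_mem _

/-- ordered product of gates: prodGate m = gate (m-1) * ... * gate 0 -/
def prodGate : ℕ → Matrix (Fin n) (Fin n) ℂ
  | 0 => 1
  | (m+1) => gate n m * prodGate m

lemma prodGate_mem (m : ℕ) : prodGate n m ∈ Matrix.unitaryGroup (Fin n) ℂ := by
  induction m with
  | zero => exact one_mem _
  | succ m ih => exact mul_mem (gate_mem n m) ih

lemma prodGate_rowsum (m : ℕ) (i : Fin n) : ∑ j, prodGate n m i j = 1 := by
  induction m generalizing i with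
  | zero => simp [prodGate, Matrix.one_apply, Finset.sum_ite_eq]
  | succ m ih =>
    by_cases h : m + 1 < n
    · rw [prodGate]
      simp only [gate_mul_apply n m h]
      rw [Finset.sum_sub_distrib, ih, ← Finset.mul_sum, Finset.sum_sub_distrib, ih, ih]
      ring
    · rw [prodGate, gate, dif_neg h, one_mul]
      exact ih i


lemma prodGate_eq_one_entry (m : ℕ) (i j : Fin n) (hj : m < (j:ℕ)) :
    prodGate n m i j = if i = j then (1:ℂ) else 0 := by
  induction m generalizing i with
  | zero => simp [prodGate, Matrix.one_apply]
  | succ m ih =>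
    by_cases h : m + 1 < n
    · rw [prodGate, gate_mul_apply n m h]
      have e2 : prodGate n m ⟨m, Nat.lt_of_succ_lt h⟩ j = 0 := by
        rw [ih _ (by omega)]
        have : (⟨m, Nat.lt_of_succ_lt h⟩ : Fin n) ≠ j := by
          simp [Fin.ext_iff]; omega
        simp [this]
      have e3 : prodGate n m ⟨m+1, h⟩ j = 0 := by
        rw [ih _ (by omega)]
        have : (⟨m+1, h⟩ : Fin n) ≠ j := by
          simp [Fin.ext_iff]; omega
        simp [this]
      rw [e2, e3, ih i (by omega)]
      ring
    · rw [prodGate, gate, dif_neg h, one_mul]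
      exact ih i (by omega)

lemma prodGate_hess (m : ℕ) (i j : Fin n) (hij : (i:ℕ) + 1 < (j:ℕ)) :
    prodGate n m i j = 0 := by
  induction m generalizing i with
  | zero =>
    have : i ≠ j := by simp [Fin.ext_iff]; omega
    simp [prodGate, Matrix.one_apply, this]
  | succ m ih =>
    by_cases h : m + 1 < n
    · rw [prodGate, gate_mul_apply n m h]
      by_cases him : (i:ℕ) = m
      · have e1 : prodGate n m ⟨m, Nat.lt_of_succ_lt h⟩ j = 0 := by
          have : (⟨m, Nat.lt_of_succ_lt h⟩ : Fin n) = i := by simp [Fin.ext_iff, him]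
          rw [this]; exact ih i hij
        have e2 : prodGate n m ⟨m+1, h⟩ j = 0 := by
          rw [prodGate_eq_one_entry n m _ _ (by omega)]
          have : (⟨m+1, h⟩ : Fin n) ≠ j := by simp [Fin.ext_iff]; omega
          simp [this]
        rw [e1, e2, ih i hij]
        ring
      · by_cases him1 : (i:ℕ) = m + 1
        · have e1 : prodGate n m ⟨m, Nat.lt_of_succ_lt h⟩ j = 0 := by
            rw [prodGate_eq_one_entry n m _ _ (by omega)]
            have : (⟨m, Nat.lt_of_succ_lt h⟩ : Fin n) ≠ j := by simp [Fin.ext_iff]; omega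
            simp [this]
          have e2 : prodGate n m ⟨m+1, h⟩ j = 0 := by
            have : (⟨m+1, h⟩ : Fin n) = i := by simp [Fin.ext_iff, him1]
            rw [this]; exact ih i hij
          rw [e1, e2, ih i hij]
          ring
        · rw [ih i hij]
          simp [him, him1]
    · rw [prodGate, gate, dif_neg h, one_mul]
      exact ih i hij

lemma prodGate_diag (m : ℕ) (k : ℕ) (hk : k + 1 < n) (hkm : k + 1 ≤ m) :
    prodGate n m ⟨k, Nat.lt_of_succ_lt hk⟩ ⟨k+1, hk⟩ = gACoef := by
  induction m with
  | zero => omega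
  | succ m ih =>
    by_cases h : m + 1 < n
    · rw [prodGate, gate_mul_apply n m h]
      by_cases hkm' : k = m
      · subst hkm'
        have e1 : prodGate n k ⟨k, Nat.lt_of_succ_lt h⟩ ⟨k+1, hk⟩ = 0 := by
          rw [prodGate_eq_one_entry n k _ _ (by simp)]
          have : (⟨k, Nat.lt_of_succ_lt h⟩ : Fin n) ≠ ⟨k+1, hk⟩ := by
            simp [Fin.ext_iff]
          simp [this]
        have e2 : prodGate n k ⟨k+1, h⟩ ⟨k+1, hk⟩ = 1 := by
          rw [prodGate_eq_one_entry n k _ _ (by simp)]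
          have : (⟨k+1, h⟩ : Fin n) = ⟨k+1, hk⟩ := by simp
          simp [this]
        have hc1 : ((⟨k, Nat.lt_of_succ_lt hk⟩ : Fin n) : ℕ) = k := rfl
        rw [e1, e2]
        simp [hc1]
      · have hklt : k + 1 ≤ m := by omega
        have hc1 : ¬(((⟨k, Nat.lt_of_succ_lt hk⟩ : Fin n) : ℕ) = m) := by simpa using hkm'
        have hc2 : ¬(((⟨k, Nat.lt_of_succ_lt hk⟩ : Fin n) : ℕ) = m + 1) := by simp; omega
        rw [ih hklt]
        simp [hc1, hc2]
    · rw [prodGate, gate, dif_neg h, one_mul]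
      exact ih (by omega)

/-- The base-point matrix: product of all gates. -/
def BB : Matrix (Fin n) (Fin n) ℂ := prodGate n (n - 1)

lemma BB_mem : BB n ∈ Matrix.unitaryGroup (Fin n) ℂ := prodGate_mem n _

lemma BB_rowsum (i : Fin n) : ∑ j, BB n i j = 1 := prodGate_rowsum n _ i

lemma BB_hess (i j : Fin n) (hij : (i:ℕ) + 1 < (j:ℕ)) : BB n i j = 0 :=
  prodGate_hess n _ i j hij

lemma BB_diag (i j : Fin n) (hij : (j:ℕ) = (i:ℕ) + 1) : BB n i j = gACoef := by
  have hk : (i:ℕ) + 1 < n := by have := j.isLt; omega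
  have h1 : i = ⟨(i:ℕ), Nat.lt_of_succ_lt hk⟩ := by simp [Fin.ext_iff]
  have h2 : j = ⟨(i:ℕ)+1, hk⟩ := by simp [Fin.ext_iff, hij]
  rw [h1, h2, BB]
  exact prodGate_diag n (n-1) (i:ℕ) hk (by omega)


lemma sum_normSq_mulVec (A : Matrix (Fin n) (Fin n) ℂ)
    (hA : A ∈ Matrix.unitaryGroup (Fin n) ℂ) (u : Fin n → ℂ) :
    ∑ k, Complex.normSq (A.mulVec u k) = ∑ j, Complex.normSq (u j) := by
  have hsw : ∀ w : Fin n → ℂ,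
      star w ⬝ᵥ w = ((∑ k, Complex.normSq (w k) : ℝ) : ℂ) := by
    intro w
    simp only [dotProduct, Pi.star_apply]
    push_cast
    exact Finset.sum_congr rfl fun k _ => by
      rw [Complex.star_def, mul_comm, Complex.mul_conj]
  have hU : Aᴴ * A = 1 := by
    have := Matrix.mem_unitaryGroup_iff'.mp hA
    simpa [Matrix.star_eq_conjTranspose] using this
  have h1 : star (A.mulVec u) ⬝ᵥ (A.mulVec u) = star u ⬝ᵥ u := by
    rw [Matrix.star_mulVec, ← Matrix.dotProduct_mulVec, Matrix.mulVec_mulVec, hU,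
      Matrix.one_mulVec]
  rw [hsw, hsw] at h1
  exact_mod_cast h1

section Analysis

abbrev EE := (Fin n → ℝ) × (Fin n → Fin n → ℂ)

def zmap (k : Fin n) (p : EE n) : ℂ :=
  ∑ j, p.2 k j * Complex.exp (Complex.I * (p.1 j : ℂ))

variable (hn : 0 < n)

def Hmap (p : EE n) : EE n :=
  (fun k => if (k:ℕ) + 1 = n then p.1 ⟨0, hn⟩ else Complex.normSq (zmap n k p), p.2)

def projTh (j : Fin n) : EE n →L[ℝ] ℝ :=
  (ContinuousLinearMap.proj j).comp
    (ContinuousLinearMap.fst ℝ (Fin n → ℝ) (Fin n → Fin n → ℂ))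

def projMat (k j : Fin n) : EE n →L[ℝ] ℂ :=
  (ContinuousLinearMap.proj j).comp ((ContinuousLinearMap.proj k).comp
    (ContinuousLinearMap.snd ℝ (Fin n → ℝ) (Fin n → Fin n → ℂ)))

def LzCLM (k : Fin n) : EE n →L[ℝ] ℂ :=
  ∑ j, (projMat n k j + (BB n k j * Complex.I) • (Complex.ofRealCLM.comp (projTh n j)))

def LrowCLM (k : Fin n) : EE n →L[ℝ] ℝ :=
  if (k:ℕ) + 1 = n then projTh n ⟨0, hn⟩ else (2:ℝ) • (Complex.reCLM.comp (LzCLM n k))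

def LfullCLM : EE n →L[ℝ] EE n :=
  (ContinuousLinearMap.pi (LrowCLM n hn)).prod
    (ContinuousLinearMap.snd ℝ (Fin n → ℝ) (Fin n → Fin n → ℂ))

def pbase : EE n := (0, fun i j => BB n i j)

lemma zmap_base (k : Fin n) : zmap n k (pbase n) = 1 := by
  have : ∀ j : Fin n, (pbase n).2 k j * Complex.exp (Complex.I * ((pbase n).1 j : ℂ))
      = BB n k j := by
    intro j
    simp [pbase]
  rw [zmap, Finset.sum_congr rfl fun j _ => this j]
  exact BB_rowsum n k

lemma hasFDerivAt_zmap (k : Fin n) :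
    HasFDerivAt (zmap n k) (LzCLM n k) (pbase n) := by
  have hterm : ∀ j : Fin n, HasFDerivAt
      (fun p : EE n => p.2 k j * Complex.exp (Complex.I * (p.1 j : ℂ)))
      ((fun i j => BB n i j) k j • (Complex.exp (Complex.I * ((0 : Fin n → ℝ) j : ℂ)) •
          (Complex.I • (Complex.ofRealCLM.comp (projTh n j)))) +
        Complex.exp (Complex.I * ((0 : Fin n → ℝ) j : ℂ)) • projMat n k j)
      (pbase n) := by
    intro j
    have h1 : HasFDerivAt (fun p : EE n => p.2 k j) (projMat n k j) (pbase n) :=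
      (projMat n k j).hasFDerivAt
    have h2 : HasFDerivAt (fun p : EE n => ((p.1 j : ℝ) : ℂ))
        (Complex.ofRealCLM.comp (projTh n j)) (pbase n) :=
      (Complex.ofRealCLM.comp (projTh n j)).hasFDerivAt
    have h3 := (h2.const_mul Complex.I).cexp
    exact h1.mul h3
  have hsum := HasFDerivAt.sum (fun j (_ : j ∈ Finset.univ) => hterm j)
  have heq : (∑ j : Fin n, ((fun i j => BB n i j) k j •
        (Complex.exp (Complex.I * ((0 : Fin n → ℝ) j : ℂ)) •
          (Complex.I • (Complex.ofRealCLM.comp (projTh n j)))) +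
        Complex.exp (Complex.I * ((0 : Fin n → ℝ) j : ℂ)) • projMat n k j))
      = LzCLM n k := by
    rw [LzCLM]
    refine Finset.sum_congr rfl fun j _ => ?_
    refine ContinuousLinearMap.ext fun p => ?_
    simp only [ContinuousLinearMap.add_apply, ContinuousLinearMap.smul_apply,
      ContinuousLinearMap.comp_apply, Pi.zero_apply, Complex.ofReal_zero, mul_zero,
      Complex.exp_zero, one_smul, smul_eq_mul]
    ring
  rw [← heq]
  have hfz : (∑ j : Fin n, fun p : EE n => p.2 k j * Complex.exp (Complex.I * (p.1 j : ℂ)))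
      = zmap n k := by
    funext p
    rw [Finset.sum_apply]
    rfl
  rw [hfz] at hsum
  exact hsum

lemma hasFDerivAt_Hmap : HasFDerivAt (Hmap n hn) (LfullCLM n hn) (pbase n) := by
  refine HasFDerivAt.prodMk ?_ hasFDerivAt_snd
  refine hasFDerivAt_pi'' ?_
  intro k
  rw [ContinuousLinearMap.proj_pi]
  by_cases hk : (k:ℕ) + 1 = n
  · simp only [LrowCLM, if_pos hk, hk]
    exact (projTh n ⟨0, hn⟩).hasFDerivAt
  · simp only [LrowCLM, if_neg hk, hk]
    have hz := hasFDerivAt_zmap n k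
    have hre : HasFDerivAt (fun p : EE n => (zmap n k p).re)
        (Complex.reCLM.comp (LzCLM n k)) (pbase n) :=
      (Complex.reCLM.hasFDerivAt).comp (pbase n) hz
    have him : HasFDerivAt (fun p : EE n => (zmap n k p).im)
        (Complex.imCLM.comp (LzCLM n k)) (pbase n) :=
      (Complex.imCLM.hasFDerivAt).comp (pbase n) hz
    have hsq := (hre.mul hre).add (him.mul him)
    have hfun : (fun p : EE n => (zmap n k p).re * (zmap n k p).re
        + (zmap n k p).im * (zmap n k p).im)
        = fun p : EE n => Complex.normSq (zmap n k p) := by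
      funext p
      rw [Complex.normSq_apply]
    change HasFDerivAt (fun p : EE n => (zmap n k p).re * (zmap n k p).re
        + (zmap n k p).im * (zmap n k p).im) _ _ at hsq
    rw [hfun] at hsq
    have heq : ((zmap n k (pbase n)).re • Complex.reCLM.comp (LzCLM n k) +
          (zmap n k (pbase n)).re • Complex.reCLM.comp (LzCLM n k)) +
        ((zmap n k (pbase n)).im • Complex.imCLM.comp (LzCLM n k) +
          (zmap n k (pbase n)).im • Complex.imCLM.comp (LzCLM n k))
        = (2:ℝ) • (Complex.reCLM.comp (LzCLM n k)) := by
      rw [zmap_base]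
      refine ContinuousLinearMap.ext fun p => ?_
      simp only [ContinuousLinearMap.add_apply, ContinuousLinearMap.smul_apply,
        Complex.one_re, Complex.one_im, one_smul, zero_smul, add_zero, smul_eq_mul]
      ring
    rw [← heq]
    exact hsq


lemma contDiff_Hmap : ContDiff ℝ 1 (Hmap n hn) := by
  refine ContDiff.prodMk ?_ contDiff_snd
  refine contDiff_pi.mpr ?_
  intro k
  by_cases hk : (k:ℕ) + 1 = n
  · simp only [if_pos hk]
    exact (projTh n ⟨0, hn⟩).contDiff
  · simp only [if_neg hk, Complex.normSq_apply]
    have hz : ContDiff ℝ 1 (zmap n k) := by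
      refine ContDiff.sum fun j _ => ?_
      refine ContDiff.mul (projMat n k j).contDiff ?_
      refine Complex.contDiff_exp.comp ?_
      exact contDiff_const.mul (Complex.ofRealCLM.comp (projTh n j)).contDiff
    have hre : ContDiff ℝ 1 fun p : EE n => (zmap n k p).re :=
      Complex.reCLM.contDiff.comp hz
    have him : ContDiff ℝ 1 fun p : EE n => (zmap n k p).im :=
      Complex.imCLM.contDiff.comp hz
    exact (hre.mul hre).add (him.mul him)

lemma gACoef_mul_I_re : (gACoef * Complex.I).re = -(1/2 : ℝ) := by
  simp [gACoef]
  try norm_num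

lemma LfullCLM_inj : Function.Injective (LfullCLM n hn) := by
  have key : ∀ x : EE n, LfullCLM n hn x = 0 → x = 0 := by
    intro x hx
    have h2 : x.2 = 0 := congrArg Prod.snd hx
    have h1 : ∀ k : Fin n, LrowCLM n hn k x = 0 := by
      intro k
      have := congrArg Prod.fst hx
      have := congrFun this k
      simpa [LfullCLM, ContinuousLinearMap.pi_apply] using this
    have hrow : ∀ k : Fin n, (k:ℕ) + 1 ≠ n →
        ∑ j, (BB n k j * Complex.I).re * x.1 j = 0 := by
      intro k hk
      have h := h1 k
      rw [LrowCLM, if_neg hk] at h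
      have hz : LzCLM n k x = ∑ j, (BB n k j * Complex.I) * (x.1 j : ℂ) := by
        rw [LzCLM, ContinuousLinearMap.sum_apply]
        refine Finset.sum_congr rfl fun j _ => ?_
        simp [projMat, projTh, h2]
      have : (2:ℝ) * (LzCLM n k x).re = 0 := by simpa using h
      rw [hz, Complex.re_sum] at this
      have h4 : ∀ j : Fin n, ((BB n k j * Complex.I) * (x.1 j : ℂ)).re
          = (BB n k j * Complex.I).re * x.1 j := by
        intro j
        rw [Complex.mul_re]
        simp
      rw [Finset.sum_congr rfl fun j _ => h4 j] at this
      linarith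
    have hth : ∀ t : ℕ, ∀ ht : t < n, x.1 ⟨t, ht⟩ = 0 := by
      intro t
      induction t using Nat.strong_induction_on with
      | _ t IH =>
        intro ht
        match t, ht with
        | 0, ht =>
          have hlast : ((⟨n-1, by omega⟩ : Fin n) : ℕ) + 1 = n := by simp; omega
          have := h1 ⟨n-1, by omega⟩
          rw [LrowCLM, if_pos hlast] at this
          simpa [projTh] using this
        | (s+1), ht =>
          have hk : ((⟨s, by omega⟩ : Fin n) : ℕ) + 1 ≠ n := by simp; omega
          have hr := hrow ⟨s, by omega⟩ hk
          have hsingle : ∀ j : Fin n, j ≠ ⟨s+1, ht⟩ →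
              (BB n ⟨s, by omega⟩ j * Complex.I).re * x.1 j = 0 := by
            intro j hj
            rcases lt_trichotomy (j:ℕ) (s+1) with hlt | heq | hgt
            · have := IH (j:ℕ) (by omega) j.isLt
              have hje : (⟨(j:ℕ), j.isLt⟩ : Fin n) = j := by simp
              rw [hje] at this
              rw [this, mul_zero]
            · exact absurd (Fin.ext heq) hj
            · have : BB n ⟨s, by omega⟩ j = 0 := BB_hess n _ j (by simpa using hgt)
              rw [this]
              simp
          rw [Finset.sum_eq_single (⟨s+1, ht⟩ : Fin n)
            (fun j _ hj => hsingle j hj) (by simp)] at hr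
          have hdiag : BB n ⟨s, by omega⟩ ⟨s+1, ht⟩ = gACoef :=
            BB_diag n _ _ (by simp)
          rw [hdiag, gACoef_mul_I_re] at hr
          have : x.1 ⟨s+1, ht⟩ = 0 := by linarith
          exact this
    have h1' : x.1 = 0 := by
      funext j
      have := hth (j:ℕ) j.isLt
      simpa using this
    exact Prod.ext h1' h2
  exact (injective_iff_map_eq_zero _).mpr key

def Lequiv : EE n ≃L[ℝ] EE n :=
  (LinearEquiv.ofBijective (LfullCLM n hn).toLinearMap
    ⟨LfullCLM_inj n hn, LinearMap.injective_iff_surjective.mp (LfullCLM_inj n hn)⟩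
    ).toContinuousLinearEquiv

lemma Lequiv_coe : ((Lequiv n hn : EE n ≃L[ℝ] EE n) : EE n →L[ℝ] EE n) = LfullCLM n hn := by
  refine ContinuousLinearMap.ext fun x => ?_
  rfl

lemma hasStrict : HasStrictFDerivAt (Hmap n hn) ((Lequiv n hn : EE n ≃L[ℝ] EE n) : EE n →L[ℝ] EE n) (pbase n) := by
  rw [Lequiv_coe]
  exact (contDiff_Hmap n hn).contDiffAt.hasStrictFDerivAt' (hasFDerivAt_Hmap n hn) one_ne_zero

end Analysis

end BiuniAux


/-- For every `n ≥ 1`, the set `𝓑ₙ` of unitary matrices with a biunimodular vector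
has nonempty interior in `U(n)`. -/
theorem biuniSet_interior_nonempty (n : ℕ) (hn : 1 ≤ n) :
    (interior (biuniSet n)).Nonempty := by
  classical
  have hn' : 0 < n := hn
  refine ⟨⟨BiuniAux.BB n, BiuniAux.BB_mem n⟩, ?_⟩
  have hmapeq := (BiuniAux.hasStrict n hn').map_nhds_eq_of_equiv
  have hrange : Set.range (BiuniAux.Hmap n hn')
      ∈ nhds (BiuniAux.Hmap n hn' (BiuniAux.pbase n)) := by
    rw [← hmapeq]
    exact Filter.range_mem_map
  obtain ⟨V, hVsub, hVopen, hVmem⟩ := mem_nhds_iff.mp hrange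
  set c0 : Fin n → ℝ := fun k => if (k:ℕ) + 1 = n then 0 else 1 with hc0
  have hHbase : BiuniAux.Hmap n hn' (BiuniAux.pbase n)
      = (c0, fun i j => BiuniAux.BB n i j) := by
    rw [BiuniAux.Hmap]
    refine Prod.ext ?_ rfl
    funext k
    by_cases hk : (k:ℕ) + 1 = n
    · simp [hk, BiuniAux.pbase, hc0]
    · simp [hk, hc0, BiuniAux.zmap_base]
  have hval : Continuous fun A : Matrix.unitaryGroup (Fin n) ℂ =>
      ((A : Matrix (Fin n) (Fin n) ℂ) : Fin n → Fin n → ℂ) := continuous_subtype_val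
  set S : Set (Matrix.unitaryGroup (Fin n) ℂ) :=
    (fun A : Matrix.unitaryGroup (Fin n) ℂ =>
      ((c0, fun i j => (A : Matrix (Fin n) (Fin n) ℂ) i j) : BiuniAux.EE n)) ⁻¹' V with hS
  have hSopen : IsOpen S := hVopen.preimage ((Continuous.prodMk_right c0).comp hval)
  have hA0S : (⟨BiuniAux.BB n, BiuniAux.BB_mem n⟩ : Matrix.unitaryGroup (Fin n) ℂ) ∈ S := by
    rw [hS]
    show ((c0, fun i j => BiuniAux.BB n i j) : BiuniAux.EE n) ∈ V
    rw [← hHbase]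
    exact hVmem
  have hsub : S ⊆ biuniSet n := by
    intro A hA
    obtain ⟨p, hp⟩ := hVsub hA
    have hp2 : p.2 = fun i j => (A : Matrix (Fin n) (Fin n) ℂ) i j := congrArg Prod.snd hp
    have hp1 := congrArg Prod.fst hp
    set v : Fin n → ℂ := fun j => Complex.exp (Complex.I * (p.1 j : ℂ)) with hv
    have habsv : ∀ j, ‖v j‖ = 1 := by
      intro j
      rw [hv]
      simp [Complex.norm_exp, Complex.mul_re]
    have hAv : ∀ k, (A : Matrix (Fin n) (Fin n) ℂ).mulVec v k = BiuniAux.zmap n k p := by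
      intro k
      have h0 : (A : Matrix (Fin n) (Fin n) ℂ).mulVec v k
          = ∑ j, (A : Matrix (Fin n) (Fin n) ℂ) k j * v j := rfl
      rw [h0, BiuniAux.zmap, hp2]
    have hks : ∀ k : Fin n, (k:ℕ) + 1 ≠ n →
        Complex.normSq ((A : Matrix (Fin n) (Fin n) ℂ).mulVec v k) = 1 := by
      intro k hk
      have hck := congrFun hp1 k
      simp only [BiuniAux.Hmap, if_neg hk] at hck
      rw [hAv k, hck, hc0]
      simp [hk]
    have hsum := BiuniAux.sum_normSq_mulVec n (A : Matrix (Fin n) (Fin n) ℂ) A.2 v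
    have hvj : ∀ j, Complex.normSq (v j) = 1 := by
      intro j
      rw [Complex.normSq_eq_norm_sq, habsv j]
      norm_num
    have hsumv : ∑ j, Complex.normSq (v j) = (n : ℝ) := by
      rw [Finset.sum_congr rfl fun j _ => hvj j]
      simp
    set klast : Fin n := ⟨n - 1, by omega⟩ with hklast
    have hklastval : (klast : ℕ) + 1 = n := by rw [hklast]; simp; omega
    have hsplit := Finset.sum_erase_add Finset.univ
      (fun k => Complex.normSq ((A : Matrix (Fin n) (Fin n) ℂ).mulVec v k))
      (Finset.mem_univ klast)
    have herase : ∀ k ∈ Finset.univ.erase klast,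
        Complex.normSq ((A : Matrix (Fin n) (Fin n) ℂ).mulVec v k) = 1 := by
      intro k hk'
      have hkne : k ≠ klast := Finset.ne_of_mem_erase hk'
      refine hks k ?_
      intro hcon
      apply hkne
      have : (k : ℕ) = n - 1 := by omega
      rw [hklast]
      exact Fin.ext (by simpa using this)
    rw [Finset.sum_congr rfl herase] at hsplit
    have hcard : (Finset.univ.erase klast).card = n - 1 := by
      rw [Finset.card_erase_of_mem (Finset.mem_univ klast)]
      simp
    rw [Finset.sum_const, hcard] at hsplit
    rw [hsum, hsumv] at hsplit
    have hlastval : Complex.normSq ((A : Matrix (Fin n) (Fin n) ℂ).mulVec v klast) = 1 := by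
      have hc : ((n - 1 : ℕ) : ℝ) = (n : ℝ) - 1 := by
        have : (1:ℕ) ≤ n := hn
        push_cast [this]
        ring
      have := hsplit
      rw [nsmul_eq_mul, hc] at this
      linarith
    have habsw : ∀ k, ‖(A : Matrix (Fin n) (Fin n) ℂ).mulVec v k‖ = 1 := by
      intro k
      have hnk : Complex.normSq ((A : Matrix (Fin n) (Fin n) ℂ).mulVec v k) = 1 := by
        by_cases hkk : k = klast
        · rw [hkk]; exact hlastval
        · refine hks k ?_
          intro hcon
          apply hkk
          have : (k : ℕ) = n - 1 := by omega
          rw [hklast]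
          exact Fin.ext (by simpa using this)
      rw [Complex.norm_def, hnk, Real.sqrt_one]
    exact ⟨v, habsv, habsw⟩
  exact mem_interior.mpr ⟨S, hsub, hSopen, hA0S⟩
end
end

section
/- Let n ≥ 1 and let 𝓑ₙ denote the set of n×n unitary matrices A that possess a biunimodular vector. Then 𝓑ₙ = U(n) if and only if 𝓑ₙ is closed under matrix multiplication, i.e. A·B ∈ 𝓑ₙ whenever A, B ∈ 𝓑ₙ. -/
open Complex

noncomputable section

/-- The identity, viewed as a map into `EuclideanSpace`. -/
def toEuc {n : ℕ} (a : Fin n → ℂ) : EuclideanSpace ℂ (Fin n) := WithLp.toLp 2 a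

@[simp] lemma toEuc_apply {n : ℕ} (a : Fin n → ℂ) (k : Fin n) : toEuc a k = a k := rfl

lemma euclid_sum_apply {n m : ℕ} (g : Fin m → EuclideanSpace ℂ (Fin n)) (i : Fin n) :
    (∑ j : Fin m, g j) i = ∑ j : Fin m, g j i :=
  map_sum (PiLp.projₗ 2 (fun _ : Fin n => ℂ) i : EuclideanSpace ℂ (Fin n) →ₗ[ℂ] ℂ) g Finset.univ

lemma exists_unitary_of_isometry {n : ℕ}
    (U : EuclideanSpace ℂ (Fin n) ≃ₗᵢ[ℂ] EuclideanSpace ℂ (Fin n)) :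
    ∃ M ∈ Matrix.unitaryGroup (Fin n) ℂ,
      ∀ v : Fin n → ℂ, M.mulVec v = (U (toEuc v) : Fin n → ℂ) := by
  classical
  set M : Matrix (Fin n) (Fin n) ℂ :=
    Matrix.of (fun i j => (U (EuclideanSpace.single j 1) : Fin n → ℂ) i) with hM
  have hmul : ∀ v : Fin n → ℂ, M.mulVec v = (U (toEuc v) : Fin n → ℂ) := by
    intro v
    have hv : (∑ j : Fin n, v j • EuclideanSpace.single j (1 : ℂ)) = toEuc v := by
      have := (EuclideanSpace.basisFun (Fin n) ℂ).sum_repr (toEuc v)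
      simpa [EuclideanSpace.basisFun_apply, EuclideanSpace.basisFun_repr] using this
    funext i
    rw [Matrix.mulVec, dotProduct]
    have h2 : U (toEuc v) = ∑ j : Fin n, v j • U (EuclideanSpace.single j (1 : ℂ)) := by
      conv_lhs => rw [← hv]
      simp [map_sum, map_smul]
    rw [h2, euclid_sum_apply]
    simp [hM, mul_comm, PiLp.smul_apply]
  refine ⟨M, ?_, hmul⟩
  rw [Matrix.mem_unitaryGroup_iff']
  ext i j
  have key : (inner ℂ (U (EuclideanSpace.single i 1)) (U (EuclideanSpace.single j 1)) : ℂ)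
      = ∑ k, (starRingEnd ℂ) (M k i) * M k j := by
    rw [PiLp.inner_apply]
    simp [hM, RCLike.inner_apply]
    exact Finset.sum_congr rfl fun _ _ => mul_comm _ _
  rw [U.inner_map_map, EuclideanSpace.inner_single_left] at key
  have hmm : (star M * M) i j = ∑ k, (starRingEnd ℂ) (M k i) * M k j := by
    simp [Matrix.mul_apply, Matrix.star_apply, Matrix.conjTranspose_apply]
  rw [hmm, ← key]
  simp [EuclideanSpace.single_apply, Matrix.one_apply, eq_comm]

lemma exists_isometry_pair {n : ℕ} (hn : 2 ≤ n) (e f : Fin 2 → EuclideanSpace ℂ (Fin n))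
    (he : Orthonormal ℂ e) (hf : Orthonormal ℂ f) :
    ∃ U : EuclideanSpace ℂ (Fin n) ≃ₗᵢ[ℂ] EuclideanSpace ℂ (Fin n), U (e 0) = f 0 ∧ U (e 1) = f 1 := by
  classical
  have hcard : Module.finrank ℂ (EuclideanSpace ℂ (Fin n)) = Fintype.card (Fin n) := by simp
  set s : Set (Fin n) := {i | (i : ℕ) < 2} with hs
  have horth : ∀ (g : Fin 2 → EuclideanSpace ℂ (Fin n)), Orthonormal ℂ g →
      Orthonormal ℂ (s.restrict (fun i : Fin n => if (i : ℕ) = 0 then g 0 else g 1)) := by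
    intro g hg
    rw [orthonormal_iff_ite] at hg ⊢
    rintro ⟨i, hi⟩ ⟨j, hj⟩
    change inner ℂ (if (i : ℕ) = 0 then g 0 else g 1) (if (j : ℕ) = 0 then g 0 else g 1) = _
    have hi2 : (i : ℕ) < 2 := hi
    have hj2 : (j : ℕ) < 2 := hj
    have Hij : (⟨i, hi⟩ : s) = ⟨j, hj⟩ ↔ (i : ℕ) = (j : ℕ) := by
      simp [Subtype.ext_iff, Fin.ext_iff]
    have h0 : (i : ℕ) = 0 ∨ (i : ℕ) = 1 := by omega
    have h1 : (j : ℕ) = 0 ∨ (j : ℕ) = 1 := by omega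
    rcases h0 with h0 | h0 <;> rcases h1 with h1 | h1
    · simpa [Hij, h0, h1] using hg 0 0
    · simpa [Hij, h0, h1] using hg 0 1
    · simpa [Hij, h0, h1] using hg 1 0
    · simpa [Hij, h0, h1] using hg 1 1
  obtain ⟨b, hb⟩ := (horth e he).exists_orthonormalBasis_extension_of_card_eq hcard
  obtain ⟨c, hc⟩ := (horth f hf).exists_orthonormalBasis_extension_of_card_eq hcard
  have h2 : 0 < n := by omega
  set i0 : Fin n := ⟨0, by omega⟩ with hi0
  set i1 : Fin n := ⟨1, by omega⟩ with hi1
  refine ⟨b.repr.trans c.repr.symm, ?_, ?_⟩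
  · have hb0 : b i0 = e 0 := by simpa [hi0] using hb i0 (by simp [hs, hi0])
    have hc0 : c i0 = f 0 := by simpa [hi0] using hc i0 (by simp [hs, hi0])
    rw [← hb0, ← hc0]
    simp [LinearIsometryEquiv.trans_apply, OrthonormalBasis.repr_self,
      OrthonormalBasis.repr_symm_single]
  · have hb1 : b i1 = e 1 := by simpa [hi1] using hb i1 (by simp [hs, hi1])
    have hc1 : c i1 = f 1 := by simpa [hi1] using hc i1 (by simp [hs, hi1])
    rw [← hb1, ← hc1]
    simp [LinearIsometryEquiv.trans_apply, OrthonormalBasis.repr_self,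
      OrthonormalBasis.repr_symm_single]

lemma exists_isometry_of_gram {n : ℕ} (hn : 2 ≤ n) (t : ℝ) (ht0 : 0 ≤ t) (htn : t < n)
    (u y x z : EuclideanSpace ℂ (Fin n))
    (huu : (inner ℂ u u : ℂ) = (n : ℂ)) (hyy : (inner ℂ y y : ℂ) = (n : ℂ))
    (hxx : (inner ℂ x x : ℂ) = (n : ℂ)) (hzz : (inner ℂ z z : ℂ) = (n : ℂ))
    (huy : (inner ℂ u y : ℂ) = (t : ℂ)) (hxz : (inner ℂ x z : ℂ) = (t : ℂ)) :
    ∃ U : EuclideanSpace ℂ (Fin n) ≃ₗᵢ[ℂ] EuclideanSpace ℂ (Fin n),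
      U u = x ∧ U y = z := by
  have hn0 : (0 : ℝ) < n := by positivity
  have hnC : (n : ℂ) ≠ 0 := by exact_mod_cast hn0.ne'
  set sN : ℝ := Real.sqrt n with hsN
  have hsN0 : 0 < sN := Real.sqrt_pos.mpr hn0
  have hsNsq : sN * sN = n := Real.mul_self_sqrt hn0.le
  have hr2pos : 0 < n - t ^ 2 / n := by
    rw [sub_pos, div_lt_iff₀ hn0]
    nlinarith
  set r : ℝ := Real.sqrt (n - t ^ 2 / n) with hr
  have hr0 : 0 < r := Real.sqrt_pos.mpr hr2pos
  have hrsq : r * r = n - t ^ 2 / n := Real.mul_self_sqrt hr2pos.le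
  set c : ℝ := t / n with hc
  have horth : ∀ (a b : EuclideanSpace ℂ (Fin n)),
      (inner ℂ a a : ℂ) = (n : ℂ) → (inner ℂ b b : ℂ) = (n : ℂ) → (inner ℂ a b : ℂ) = (t : ℂ) →
      Orthonormal ℂ ![((sN⁻¹ : ℝ) : ℂ) • a, ((r⁻¹ : ℝ) : ℂ) • (b - ((c : ℝ) : ℂ) • a)] := by
    intro a b haa hbb hab
    have hba : (inner ℂ b a : ℂ) = (t : ℂ) := by
      rw [← inner_conj_symm, hab]
      simp
    rw [orthonormal_iff_ite]
    intro i j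
    fin_cases i <;> fin_cases j <;>
      simp only [Fin.zero_eta, Fin.mk_one, Fin.isValue, Matrix.cons_val_zero,
        Matrix.cons_val_one, Matrix.head_cons, if_true, if_false] <;>
      simp only [inner_smul_left, inner_smul_right, inner_sub_left, inner_sub_right,
        haa, hbb, hab, hba, conj_ofReal, reduceIte]
    · have h1 : ((sN:ℂ)) * sN = (n:ℂ) := by exact_mod_cast congrArg Complex.ofReal hsNsq
      push_cast
      field_simp
      rw [sq, h1, div_self hnC]
    · have hcC : ((c:ℝ):ℂ) = (t:ℂ)/(n:ℂ) := by rw [hc]; push_cast; ring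
      rw [hcC]
      push_cast
      field_simp
      simp
    · have hcC : ((c:ℝ):ℂ) = (t:ℂ)/(n:ℂ) := by rw [hc]; push_cast; ring
      rw [hcC]
      push_cast
      field_simp
      simp
    · have hrsqC : ((r:ℂ)) * r = ((n : ℂ) - (t:ℂ) ^ 2 / n) := by
        exact_mod_cast congrArg Complex.ofReal hrsq
      have hcC : ((c:ℝ):ℂ) = (t:ℂ)/(n:ℂ) := by rw [hc]; push_cast; ring
      rw [hcC]
      push_cast
      field_simp
      have hpos : (0:ℝ) < (n:ℝ)*n - t*t := by nlinarith
      have hne : ((n:ℂ))*n - (t:ℂ)*t ≠ 0 := by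
        rw [show ((n:ℂ))*n - (t:ℂ)*t = (((n:ℝ)*n - t*t : ℝ) : ℂ) by push_cast; ring]
        exact_mod_cast hpos.ne'
      have h9 : ((r:ℂ) * ((r:ℂ) * n)) = (n:ℂ)*n - (t:ℂ)*t := by
        rw [← mul_assoc, hrsqC]
        field_simp
      rw [sub_self, mul_zero, sub_zero, sq (r:ℂ), hrsqC, div_eq_iff (by rw [← hrsqC]; exact mul_ne_zero (by exact_mod_cast hr0.ne') (by exact_mod_cast hr0.ne')), mul_sub, mul_div_assoc', mul_div_cancel_left₀ _ hnC]
      ring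
  obtain ⟨U, hU0, hU1⟩ := exists_isometry_pair hn _ _
    (horth u y huu hyy huy) (horth x z hxx hzz hxz)
  simp only [Matrix.cons_val_zero, Matrix.cons_val_one, Matrix.head_cons] at hU0 hU1
  have hsN1 : ((sN:ℝ):ℂ) * ((sN⁻¹:ℝ):ℂ) = 1 := by
    push_cast
    exact mul_inv_cancel₀ (by exact_mod_cast hsN0.ne')
  have hr1 : ((r:ℝ):ℂ) * ((r⁻¹:ℝ):ℂ) = 1 := by
    push_cast
    exact mul_inv_cancel₀ (by exact_mod_cast hr0.ne')
  have hUu : U u = x := by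
    have h2 : u = ((sN : ℝ) : ℂ) • (((sN⁻¹ : ℝ) : ℂ) • u) := by
      rw [smul_smul, hsN1, one_smul]
    rw [h2, map_smul, hU0, smul_smul, hsN1, one_smul]
  refine ⟨U, hUu, ?_⟩
  have hy : y = ((c : ℝ) : ℂ) • u
      + ((r : ℝ) : ℂ) • (((r⁻¹ : ℝ) : ℂ) • (y - ((c:ℝ):ℂ) • u)) := by
    rw [smul_smul, hr1, one_smul]
    abel
  rw [hy, map_add, map_smul, map_smul, hUu, hU1, smul_smul, hr1, one_smul]
  abel

lemma exists_unimodular_sum {n : ℕ} (hn : 2 ≤ n) (t : ℝ) (ht0 : 0 < t) (htn : t ≤ n) :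
    ∃ y : Fin n → ℂ, (∀ k, ‖y k‖ = 1) ∧ ∑ k, y k = (t : ℂ) := by
  set S : ℝ → ℂ := fun α => ∑ k : Fin n, Complex.exp (α * I) ^ (k : ℕ) with hS
  have hcont : Continuous fun α => ‖S α‖ := by
    apply continuous_norm.comp
    refine continuous_finset_sum _ fun k _ => ?_
    exact (Complex.continuous_exp.comp (by continuity)).pow _
  have hS0 : ‖S 0‖ = n := by simp [hS]
  have hS1 : ‖S (2 * Real.pi / n)‖ = 0 := by
    have hnR : (0:ℝ) < n := by positivity
    have hnC : (n:ℂ) ≠ 0 := by exact_mod_cast hnR.ne'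
    set ζ : ℂ := Complex.exp ((2 * Real.pi / n : ℝ) * I) with hζ
    have hζn : ζ ^ n = 1 := by
      rw [hζ, ← Complex.exp_nat_mul]
      rw [show (n : ℂ) * (((2 * Real.pi / n : ℝ) : ℂ) * I) = 2 * Real.pi * I by
        push_cast
        field_simp [hnC]]
      exact Complex.exp_two_pi_mul_I
    have hζ1 : ζ ≠ 1 := by
      rw [hζ, Ne, Complex.exp_eq_one_iff]
      rintro ⟨k, hk⟩
      rw [show ((k:ℂ)) * (2 * Real.pi * I) = ((k * 2 * Real.pi : ℝ) : ℂ) * I by push_cast; ring]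
        at hk
      have := mul_right_cancel₀ Complex.I_ne_zero hk
      have h2 : (2 * Real.pi / n : ℝ) = k * 2 * Real.pi := by exact_mod_cast this
      have hpi := Real.pi_pos
      have hk1 : (k : ℝ) * n = 1 := by
        field_simp at h2
        nlinarith
      have hkn : (k * n : ℤ) = 1 := by exact_mod_cast hk1
      have hdvd : (n:ℤ) ∣ 1 := Dvd.intro k (by linarith)
      have hle := Int.le_of_dvd one_pos hdvd
      have hn2 : (2 : ℤ) ≤ (n:ℤ) := by exact_mod_cast hn
      omega
    have : S (2 * Real.pi / n) = 0 := by
      rw [hS]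
      simp only
      rw [Fin.sum_univ_eq_sum_range (fun k => ζ ^ k), geom_sum_eq hζ1, hζn]
      simp
    rw [this]
    simp
  obtain ⟨α, -, hα⟩ : ∃ α ∈ Set.Icc 0 (2 * Real.pi / n), ‖S α‖ = t := by
    have hsub := intermediate_value_Icc' (by positivity : (0:ℝ) ≤ 2 * Real.pi / n)
      hcont.continuousOn
    have : t ∈ Set.Icc (‖S (2 * Real.pi / n)‖) (‖S 0‖) := by
      rw [hS0, hS1]
      exact ⟨ht0.le, htn⟩
    obtain ⟨α, hα1, hα2⟩ := hsub this
    exact ⟨α, hα1, hα2⟩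
  have hSne : S α ≠ 0 := by
    intro h
    rw [h] at hα
    simp at hα
    exact ht0.ne' hα.symm
  refine ⟨fun k => ((t : ℂ) / S α) * Complex.exp (α * I) ^ (k : ℕ), fun k => ?_, ?_⟩
  · rw [norm_mul, norm_div, norm_pow, Complex.norm_exp_ofReal_mul_I]
    simp [hα, Complex.norm_real, Real.norm_eq_abs, abs_of_pos ht0, div_self ht0.ne']
  · rw [← Finset.mul_sum]
    rw [show (∑ k : Fin n, Complex.exp (α * I) ^ (k:ℕ)) = S α from rfl]
    field_simp

lemma unitary_mulVec_normsq {n : ℕ} {M : Matrix (Fin n) (Fin n) ℂ}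
    (hM : M ∈ Matrix.unitaryGroup (Fin n) ℂ) (v : Fin n → ℂ) :
    ∑ k, ‖M.mulVec v k‖ ^ 2 = ∑ k, ‖v k‖ ^ 2 := by
  have h1 : star M * M = 1 := Matrix.mem_unitaryGroup_iff'.mp hM
  have key : dotProduct (star (M.mulVec v)) (M.mulVec v)
      = dotProduct (star v) v := by
    rw [Matrix.star_mulVec, Matrix.dotProduct_mulVec, Matrix.vecMul_vecMul]
    rw [show M.conjTranspose * M = 1 from h1, Matrix.vecMul_one]
  have expand : ∀ w : Fin n → ℂ, dotProduct (star w) w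
      = ((∑ k, ‖w k‖ ^ 2 : ℝ) : ℂ) := by
    intro w
    rw [dotProduct]
    push_cast
    refine Finset.sum_congr rfl fun k _ => ?_
    simp only [Pi.star_apply, RCLike.star_def]
    rw [mul_comm, Complex.mul_conj, Complex.normSq_eq_norm_sq]
    push_cast
    ring
  rw [expand, expand] at key
  exact_mod_cast key

end

/-- `𝓑ₙ = U(n)` iff `𝓑ₙ` is closed under matrix multiplication. -/
theorem biuniSet_eq_univ_iff_mul_closed (n : ℕ) (hn : 1 ≤ n) :
    biuniSet n = Set.univ ↔
      ∀ A ∈ biuniSet n, ∀ B ∈ biuniSet n, A * B ∈ biuniSet n := by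
  constructor
  · intro h A _ B _
    rw [h]
    trivial
  · intro h
    rw [Set.eq_univ_iff_forall]
    intro A
    classical
    -- set-up : `x` is the preimage of the all-ones vector
    set A' : Matrix (Fin n) (Fin n) ℂ := (A : Matrix (Fin n) (Fin n) ℂ) with hA'
    have hAU : A' ∈ Matrix.unitaryGroup (Fin n) ℂ := A.2
    set u : Fin n → ℂ := fun _ => 1 with hu
    set x : Fin n → ℂ := (star A').mulVec u with hx
    have hstarU : star A' ∈ Matrix.unitaryGroup (Fin n) ℂ := Unitary.star_mem hAU
    have hAx : A'.mulVec x = u := by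
      rw [hx, Matrix.mulVec_mulVec, Matrix.mem_unitaryGroup_iff.mp hAU, Matrix.one_mulVec]
    have hxsq : ∑ k, ‖x k‖ ^ 2 = (n : ℝ) := by
      have h9 := unitary_mulVec_normsq hstarU u
      rw [← hx] at h9
      simpa [hu] using h9
    by_cases hxuni : ∀ k, ‖x k‖ = 1
    · -- `x` itself is a biunimodular vector for `A`
      exact ⟨x, hxuni, by rw [hAx]; intro k; simp [hu]⟩
    -- main case
    push_neg at hxuni
    obtain ⟨k₀, hk₀⟩ := hxuni
    have hn2 : 2 ≤ n := by
      by_contra h2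
      have hn1 : n = 1 := by omega
      apply hk₀
      subst hn1
      have h5 : ‖x k₀‖ ^ 2 = 1 := by
        rw [Fin.eq_zero k₀]
        rw [Fin.sum_univ_one] at hxsq
        simpa using hxsq
      nlinarith [norm_nonneg (x k₀)]
    set t : ℝ := ∑ k, ‖x k‖ with ht
    have ht0 : 0 < t := by
      have hex : ∃ k, x k ≠ 0 := by
        by_contra hc
        push_neg at hc
        have h0 : ∑ k, ‖x k‖ ^ 2 = 0 :=
          Finset.sum_eq_zero fun k _ => by rw [hc k]; simp
        rw [h0] at hxsq
        have hn0 : n = 0 := by exact_mod_cast hxsq.symm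
        omega
      obtain ⟨k₁, hk₁⟩ := hex
      have h1 : 0 < ‖x k₁‖ := norm_pos_iff.mpr hk₁
      calc (0:ℝ) < ‖x k₁‖ := h1
        _ ≤ t := Finset.single_le_sum (fun k _ => norm_nonneg (x k))
            (Finset.mem_univ k₁)
    have htn : t < n := by
      have hsum : ∑ k, (1 - ‖x k‖) ^ 2 = 2 * ((n : ℝ) - t) := by
        have h6 : ∀ k : Fin n, (1 - ‖x k‖) ^ 2
            = 1 - 2 * ‖x k‖ + ‖x k‖ ^ 2 := fun k => by ring
        rw [Finset.sum_congr rfl fun k _ => h6 k]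
        rw [Finset.sum_add_distrib, Finset.sum_sub_distrib, hxsq, ← Finset.mul_sum, ← ht]
        simp
        ring
      have hpos : 0 < ∑ k, (1 - ‖x k‖) ^ 2 := by
        refine Finset.sum_pos' (fun k _ => sq_nonneg _) ⟨k₀, Finset.mem_univ k₀, ?_⟩
        have h7 : 1 - ‖x k₀‖ ≠ 0 := fun hc => hk₀ (by linarith)
        positivity
      rw [hsum] at hpos
      linarith
    -- the unimodular vectors y and z
    obtain ⟨y, hyuni, hysum⟩ := exists_unimodular_sum hn2 t ht0 htn.le
    set z : Fin n → ℂ := fun k => if x k = 0 then 1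
      else x k / ((‖x k‖ : ℝ) : ℂ) with hz
    have hzuni : ∀ k, ‖z k‖ = 1 := by
      intro k
      rw [hz]
      by_cases hc : x k = 0
      · simp [hc]
      · have h8 : ‖x k‖ ≠ 0 := norm_ne_zero_iff.mpr hc
        simp only [hc, if_false, norm_div, Complex.norm_real, Real.norm_eq_abs,
          _root_.abs_of_nonneg (norm_nonneg (x k))]
        field_simp
    have hzx : ∀ k, (starRingEnd ℂ) (x k) * z k = ((‖x k‖ : ℝ) : ℂ) := by
      intro k
      rw [hz]
      by_cases hc : x k = 0
      · simp [hc]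
      · have habs : (((‖x k‖) : ℝ) : ℂ) ≠ 0 := by
          simp only [ne_eq, Complex.ofReal_eq_zero, map_eq_zero]
          exact norm_ne_zero_iff.mpr hc
        simp only [hc, if_false]
        rw [mul_div_assoc', mul_comm, Complex.mul_conj, Complex.normSq_eq_norm_sq]
        push_cast
        field_simp
    -- the six inner products
    have hinner : ∀ a b : Fin n → ℂ,
        (inner ℂ (toEuc a) (toEuc b) : ℂ) = ∑ k, (starRingEnd ℂ) (a k) * b k := by
      intro a b
      rw [PiLp.inner_apply]
      simp [RCLike.inner_apply]
      exact Finset.sum_congr rfl fun _ _ => mul_comm _ _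
    have huu : (inner ℂ (toEuc u) (toEuc u) : ℂ) = (n : ℂ) := by
      rw [hinner]
      simp [hu]
    have habs_inner : ∀ a : Fin n → ℂ, (∀ k, ‖a k‖ = 1) →
        (inner ℂ (toEuc a) (toEuc a) : ℂ) = (n : ℂ) := by
      intro a ha
      rw [hinner]
      have h3 : ∀ k : Fin n, (starRingEnd ℂ) (a k) * a k = 1 := by
        intro k
        rw [mul_comm, Complex.mul_conj, Complex.normSq_eq_norm_sq, ha k]
        simp
      rw [Finset.sum_congr rfl fun k _ => h3 k]
      simp
    have hyy := habs_inner y hyuni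
    have hzz := habs_inner z hzuni
    have hxx : (inner ℂ (toEuc x) (toEuc x) : ℂ) = (n : ℂ) := by
      rw [hinner]
      have h4 : ∀ k : Fin n, (starRingEnd ℂ) (x k) * x k
          = ((‖x k‖ ^ 2 : ℝ) : ℂ) := by
        intro k
        rw [mul_comm, Complex.mul_conj, Complex.normSq_eq_norm_sq]
      rw [Finset.sum_congr rfl fun k _ => h4 k, ← Complex.ofReal_sum, hxsq]
      norm_cast
    have huy : (inner ℂ (toEuc u) (toEuc y) : ℂ) = (t : ℂ) := by
      rw [hinner]
      simp only [hu, map_one, one_mul]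
      exact hysum
    have hxz : (inner ℂ (toEuc x) (toEuc z) : ℂ) = (t : ℂ) := by
      rw [hinner, Finset.sum_congr rfl fun k _ => hzx k, ← Complex.ofReal_sum, ← ht]
    -- the unitary matrix C
    obtain ⟨U, hUu, hUy⟩ := exists_isometry_of_gram hn2 t ht0.le htn
      (toEuc u) (toEuc y) (toEuc x) (toEuc z) huu hyy hxx hzz huy hxz
    obtain ⟨M, hMU, hMmul⟩ := exists_unitary_of_isometry U
    set C : Matrix.unitaryGroup (Fin n) ℂ := ⟨M, hMU⟩ with hC
    have hCu : M.mulVec u = x := by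
      rw [hMmul u, hUu]
      rfl
    have hCy : M.mulVec y = z := by
      rw [hMmul y, hUy]
      rfl
    -- B = A * C is biunimodular (vector u), C⁻¹ is biunimodular (vector z)
    have hB : A * C ∈ biuniSet n := by
      refine ⟨u, fun k => by simp [hu], ?_⟩
      have hcoe : ((A * C : Matrix.unitaryGroup (Fin n) ℂ) : Matrix (Fin n) (Fin n) ℂ)
          = A' * M := rfl
      rw [hcoe, ← Matrix.mulVec_mulVec, hCu, hAx]
      intro k
      simp [hu]
    have hCinv : C⁻¹ ∈ biuniSet n := by
      refine ⟨z, hzuni, ?_⟩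
      have h10 : ((C⁻¹ : Matrix.unitaryGroup (Fin n) ℂ) : Matrix (Fin n) (Fin n) ℂ).mulVec z
          = y := by
        rw [← hCy, Matrix.mulVec_mulVec]
        have hcoe : ((C⁻¹ : Matrix.unitaryGroup (Fin n) ℂ) : Matrix (Fin n) (Fin n) ℂ) * M
            = ((C⁻¹ * C : Matrix.unitaryGroup (Fin n) ℂ) : Matrix (Fin n) (Fin n) ℂ) := rfl
        rw [hcoe, inv_mul_cancel]
        simp [Matrix.one_mulVec]
      rw [h10]
      exact hyuni
    have hfinal := h (A * C) hB C⁻¹ hCinv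
    rwa [mul_inv_cancel_right] at hfinal
end

section
/- Let n ≥ 1 and let S be an n×n unitary matrix with S·𝟏 = 𝟏. Let 𝔲 denote the real vector space of n×n skew-Hermitian complex matrices, 𝔡 ⊂ 𝔲 the subspace of diagonal matrices with purely imaginary diagonal entries, 𝔡₁ ⊂ 𝔡 the subspace of such matrices whose (1,1) entry is 0, and 𝔣 = {X ∈ 𝔲 : X·𝟏 = 0}. Then the rank of the ℝ-linear map C_S : 𝔡 × 𝔣 × 𝔡₁ → 𝔲 given by C_S(X, Y, Z) = X + Y + S·Z·S* equals (n−1)² + n + rank(Im S), where Im S is the real n×n matrix of imaginary parts of the entries of S and its rank is taken over ℝ. -/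
open Matrix

/-- The real vector space `𝔡` of diagonal matrices with purely imaginary diagonal
entries. -/
noncomputable def diagImag (n : ℕ) : Submodule ℝ (Matrix (Fin n) (Fin n) ℂ) where
  carrier := {X | X.IsDiag ∧ ∀ i, (X i i).re = 0}
  add_mem' := by
    rintro a b ⟨ha, ha'⟩ ⟨hb, hb'⟩
    exact ⟨ha.add hb, fun i => by simp [ha' i, hb' i]⟩
  zero_mem' := ⟨Matrix.isDiag_zero, fun i => by simp⟩
  smul_mem' := by
    rintro r X ⟨hX, hX'⟩
    exact ⟨hX.smul r, fun i => by simp [hX' i]⟩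

/-- The real vector space `𝔡₁ ⊂ 𝔡` of diagonal matrices with purely imaginary
diagonal entries whose `(1,1)` entry vanishes. -/
noncomputable def diagImag₁ (n : ℕ) (hn : 0 < n) : Submodule ℝ (Matrix (Fin n) (Fin n) ℂ) where
  carrier := {X | X.IsDiag ∧ (∀ i, (X i i).re = 0) ∧ X ⟨0, hn⟩ ⟨0, hn⟩ = 0}
  add_mem' := by
    rintro a b ⟨ha, ha', ha''⟩ ⟨hb, hb', hb''⟩
    exact ⟨ha.add hb, fun i => by simp [ha' i, hb' i], by simp [ha'', hb'']⟩
  zero_mem' := ⟨Matrix.isDiag_zero, fun i => by simp, by simp⟩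
  smul_mem' := by
    rintro r X ⟨hX, hX', hX''⟩
    exact ⟨hX.smul r, fun i => by simp [hX' i], by simp [hX'']⟩

/-- The real vector space `𝔣` of skew-Hermitian matrices annihilating the all-ones
vector. -/
noncomputable def skewFix (n : ℕ) : Submodule ℝ (Matrix (Fin n) (Fin n) ℂ) where
  carrier := {X | Xᴴ = -X ∧ X.mulVec (fun _ => 1) = 0}
  add_mem' := by
    rintro a b ⟨ha, ha'⟩ ⟨hb, hb'⟩
    constructor
    · rw [conjTranspose_add, ha, hb, neg_add]
    · rw [add_mulVec, ha', hb', add_zero]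
  zero_mem' := ⟨by simp, by simp⟩
  smul_mem' := by
    rintro r X ⟨hX, hX'⟩
    constructor
    · rw [conjTranspose_smul, hX, star_trivial, smul_neg]
    · rw [smul_mulVec, hX', smul_zero]

/-- The `ℝ`-linear map `C_S(X, Y, Z) = X + Y + S·Z·S*`. -/
noncomputable def CSmap (n : ℕ) (hn : 0 < n) (S : Matrix (Fin n) (Fin n) ℂ) :
    (diagImag n × skewFix n × diagImag₁ n hn) →ₗ[ℝ] Matrix (Fin n) (Fin n) ℂ where
  toFun p := (p.1 : Matrix (Fin n) (Fin n) ℂ) + (p.2.1 : Matrix (Fin n) (Fin n) ℂ) +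
    S * (p.2.2 : Matrix (Fin n) (Fin n) ℂ) * Sᴴ
  map_add' p q := by
    simp only [Prod.fst_add, Prod.snd_add, Submodule.coe_add, Matrix.add_mul,
      Matrix.mul_add]
    abel
  map_smul' r p := by
    simp only [Prod.smul_fst, Prod.smul_snd, Submodule.coe_smul, Matrix.smul_mul,
      Matrix.mul_smul, RingHom.id_apply, smul_add]

set_option synthInstance.maxHeartbeats 1000000
set_option maxHeartbeats 1000000

namespace CSaux

open Module


variable {n : ℕ}

noncomputable def skewU (n : ℕ) : Submodule ℝ (Matrix (Fin n) (Fin n) ℂ) where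
  carrier := {X | Xᴴ = -X}
  add_mem' := by
    rintro a b (ha : _ = _) (hb : _ = _)
    show _ = _
    rw [conjTranspose_add, ha, hb, neg_add]
  zero_mem' := by show _ = _; simp
  smul_mem' := by
    rintro r X (hX : _ = _)
    show _ = _
    rw [conjTranspose_smul, hX, star_trivial, smul_neg]

lemma mem_skewU {X : Matrix (Fin n) (Fin n) ℂ} : X ∈ skewU n ↔ Xᴴ = -X := Iff.rfl

noncomputable def mulI (n : ℕ) :
    Matrix (Fin n) (Fin n) ℂ ≃ₗ[ℝ] Matrix (Fin n) (Fin n) ℂ where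
  toFun X := Complex.I • X
  invFun X := (-Complex.I) • X
  map_add' := smul_add _
  map_smul' r X := smul_comm _ _ _
  left_inv X := by simp [smul_smul]
  right_inv X := by simp [smul_smul]

lemma finrank_matrixC : finrank ℝ (Matrix (Fin n) (Fin n) ℂ) = 2 * n ^ 2 := by
  rw [(Matrix.ofLinearEquiv ℝ).symm.finrank_eq]
  rw [Module.finrank_pi_fintype]
  simp [Module.finrank_pi_fintype, Complex.finrank_real_complex]
  ring

lemma finrank_skewU : finrank ℝ (skewU n) = n ^ 2 := by
  have key := Submodule.finrank_sup_add_finrank_inf_eq (skewU n)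
    ((skewU n).map (mulI n).toLinearMap)
  have hmap : finrank ℝ ((skewU n).map (mulI n).toLinearMap) = finrank ℝ (skewU n) :=
    (LinearEquiv.finrank_map_eq (mulI n) (skewU n)).symm ▸ rfl
  have hsup : skewU n ⊔ (skewU n).map (mulI n).toLinearMap = ⊤ := by
    rw [eq_top_iff]
    intro M _
    rw [Submodule.mem_sup]
    refine ⟨(2⁻¹ : ℝ) • (M - Mᴴ), ?_, Complex.I • ((2⁻¹ : ℝ) • ((-Complex.I) • (M + Mᴴ))), ?_, ?_⟩
    · apply Submodule.smul_mem
      show _ = _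
      rw [conjTranspose_sub, conjTranspose_conjTranspose, neg_sub]
    · refine ⟨(2⁻¹ : ℝ) • ((-Complex.I) • (M + Mᴴ)), ?_, rfl⟩
      apply Submodule.smul_mem
      show _ = _
      rw [conjTranspose_smul, conjTranspose_add, conjTranspose_conjTranspose]
      simp only [star_neg, Complex.star_def, Complex.conj_I, neg_neg, neg_smul]
      rw [add_comm Mᴴ M]
    · rw [smul_comm, smul_smul, mul_neg, Complex.I_mul_I, neg_neg, one_smul]
      module
  have hinf : skewU n ⊓ (skewU n).map (mulI n).toLinearMap = ⊥ := by
    rw [eq_bot_iff]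
    rintro X ⟨hX, B, hB, rfl⟩
    have hB' : Bᴴ = -B := hB
    have hX' : (Complex.I • B)ᴴ = Complex.I • B := by
      rw [conjTranspose_smul, Complex.star_def, Complex.conj_I, neg_smul, hB',
        smul_neg, neg_neg]
    have hX2 : (Complex.I • B)ᴴ = -(Complex.I • B) := hX
    have h2 : (2 : ℂ) • (Complex.I • B) = 0 := by
      rw [two_smul]
      nth_rewrite 1 [← hX']
      rw [hX2, neg_add_cancel]
    show Complex.I • B ∈ (⊥ : Submodule ℝ _)
    rw [Submodule.mem_bot]
    exact (smul_eq_zero.mp h2).resolve_left (by norm_num)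
  rw [hsup, hinf, finrank_top, finrank_bot, finrank_matrixC, hmap] at key
  omega



-- generic helpers
lemma conj_of_re_zero {z : ℂ} (hz : z.re = 0) : (starRingEnd ℂ) z = -z := by
  apply Complex.ext <;> simp [hz]

lemma range_eq_top_of_one {M : Type*} [AddCommGroup M] [Module ℝ M]
    (f : M →ₗ[ℝ] ℝ) (x : M) (hx : f x = 1) : LinearMap.range f = ⊤ := by
  rw [LinearMap.range_eq_top]
  intro c
  exact ⟨c • x, by simp [hx]⟩

lemma finrank_ker_functional {M : Type*} [AddCommGroup M] [Module ℝ M]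
    [FiniteDimensional ℝ M] (f : M →ₗ[ℝ] ℝ) (x : M) (hx : f x = 1) :
    1 + finrank ℝ (LinearMap.ker f) = finrank ℝ M := by
  have h := LinearMap.finrank_range_add_finrank_ker f
  rwa [range_eq_top_of_one f x hx, finrank_top, finrank_self] at h

lemma finrank_comap_subtype {M : Type*} [AddCommGroup M] [Module ℝ M]
    (p q : Submodule ℝ M) :
    finrank ℝ (Submodule.comap q.subtype p) = finrank ℝ ↥(p ⊓ q) := by
  have h : Submodule.comap q.subtype p = Submodule.comap q.subtype (p ⊓ q) := by
    ext x
    simp only [Submodule.mem_comap, Submodule.mem_inf, Submodule.subtype_apply]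
    exact ⟨fun h => ⟨h, x.2⟩, fun h => h.1⟩
  rw [h]
  exact (Submodule.comapSubtypeEquivOfLe inf_le_right).finrank_eq

-- the diagonal embedding
noncomputable def ediag (n : ℕ) : (Fin n → ℝ) →ₗ[ℝ] Matrix (Fin n) (Fin n) ℂ where
  toFun t := Matrix.diagonal fun j => (t j : ℂ) * Complex.I
  map_add' s t := by
    rw [Matrix.diagonal_add]
    exact congrArg Matrix.diagonal (funext fun j => by simp only [Pi.add_apply]; push_cast; ring)
  map_smul' r t := by
    rw [RingHom.id_apply, ← Matrix.diagonal_smul]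
    exact congrArg Matrix.diagonal (funext fun j => by
      simp only [Pi.smul_apply, Complex.real_smul, smul_eq_mul]; push_cast; ring)

lemma ediag_inj : Function.Injective (ediag n) := by
  intro s t h
  funext j
  have h2 : (ediag n s) j j = (ediag n t) j j := by rw [h]
  simp only [ediag, LinearMap.coe_mk, AddHom.coe_mk, Matrix.diagonal_apply_eq] at h2
  have := congrArg Complex.im h2
  simpa using this

lemma diag_eq_ediag {X : Matrix (Fin n) (Fin n) ℂ} (h1 : X.IsDiag)
    (h2 : ∀ i, (X i i).re = 0) : ediag n (fun j => (X j j).im) = X := by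
  show Matrix.diagonal _ = X
  ext i j
  by_cases hij : i = j
  · subst hij
    rw [Matrix.diagonal_apply_eq]
    apply Complex.ext <;> simp [h2 i]
  · rw [Matrix.diagonal_apply_ne _ hij, (h1 hij).symm]

lemma ediag_apply_diag (t : Fin n → ℝ) (j : Fin n) :
    ((ediag n t) j j).im = t j := by
  show ((Matrix.diagonal _ : Matrix (Fin n) (Fin n) ℂ) j j).im = t j
  simp


lemma mem_diagImag {X : Matrix (Fin n) (Fin n) ℂ} :
    X ∈ diagImag n ↔ X.IsDiag ∧ ∀ i, (X i i).re = 0 := Iff.rfl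

lemma mem_diagImag₁ {hn : 0 < n} {X : Matrix (Fin n) (Fin n) ℂ} :
    X ∈ diagImag₁ n hn ↔ X.IsDiag ∧ (∀ i, (X i i).re = 0) ∧ X ⟨0, hn⟩ ⟨0, hn⟩ = 0 := Iff.rfl

lemma mem_skewFix {X : Matrix (Fin n) (Fin n) ℂ} :
    X ∈ skewFix n ↔ Xᴴ = -X ∧ X.mulVec (fun _ => 1) = 0 := Iff.rfl

lemma ediag_isDiag (t : Fin n → ℝ) : (ediag n t).IsDiag :=
  Matrix.isDiag_diagonal _

lemma ediag_re (t : Fin n → ℝ) (i : Fin n) : ((ediag n t) i i).re = 0 := by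
  show ((Matrix.diagonal (fun j => (t j : ℂ) * Complex.I) : Matrix (Fin n) (Fin n) ℂ) i i).re = 0
  simp

lemma finrank_diagImag : finrank ℝ ↥(diagImag n) = n := by
  have hr : LinearMap.range (ediag n) = diagImag n := by
    apply le_antisymm
    · rintro _ ⟨t, rfl⟩
      exact ⟨ediag_isDiag t, ediag_re t⟩
    · intro X hX
      exact ⟨fun j => (X j j).im, diag_eq_ediag hX.1 hX.2⟩
  rw [← hr, LinearMap.finrank_range_of_inj ediag_inj, Module.finrank_pi, Fintype.card_fin]

lemma finrank_diagImag₁ (hn : 0 < n) : 1 + finrank ℝ ↥(diagImag₁ n hn) = n := by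
  classical
  set i0 : Fin n := ⟨0, hn⟩ with hi0
  set H0 : Submodule ℝ (Fin n → ℝ) :=
    LinearMap.ker (LinearMap.proj (R := ℝ) (φ := fun _ : Fin n => ℝ) i0) with hH0def
  have hinj : Function.Injective ((ediag n).comp H0.subtype) :=
    ediag_inj.comp H0.injective_subtype
  have hr : LinearMap.range ((ediag n).comp H0.subtype) = diagImag₁ n hn := by
    rw [LinearMap.range_comp, Submodule.range_subtype]
    apply le_antisymm
    · rintro _ ⟨t, ht, rfl⟩
      refine ⟨ediag_isDiag t, ediag_re t, ?_⟩
      show (Matrix.diagonal (fun j => (t j : ℂ) * Complex.I) : Matrix (Fin n) (Fin n) ℂ) i0 i0 = 0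
      rw [Matrix.diagonal_apply_eq]
      have ht0 : t i0 = 0 := ht
      rw [ht0]
      simp
    · rintro X ⟨h1, h2, h3⟩
      refine ⟨fun j => (X j j).im, ?_, diag_eq_ediag h1 h2⟩
      show (X i0 i0).im = 0
      rw [show X i0 i0 = 0 from h3]
      simp
  have hH0 : 1 + finrank ℝ ↥H0 = n := by
    have := finrank_ker_functional (M := Fin n → ℝ)
      (LinearMap.proj (R := ℝ) (φ := fun _ : Fin n => ℝ) i0) (Pi.single i0 1) (by simp)
    rwa [Module.finrank_pi, Fintype.card_fin] at this
  rw [← hr, LinearMap.finrank_range_of_inj hinj]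
  exact hH0

noncomputable def phiMap (n : ℕ) : Matrix (Fin n) (Fin n) ℂ →ₗ[ℝ] (Fin n → ℂ) where
  toFun X := X.mulVec (fun _ => 1)
  map_add' X Y := Matrix.add_mulVec X Y _
  map_smul' r X := by rw [RingHom.id_apply]; exact Matrix.smul_mulVec r X _

noncomputable def Lre (n : ℕ) : (Fin n → ℂ) →ₗ[ℝ] ℝ where
  toFun v := (∑ i, v i).re
  map_add' v w := by simp [Finset.sum_add_distrib]
  map_smul' r v := by
    simp only [Pi.smul_apply, Complex.real_smul, ← Finset.mul_sum, RingHom.id_apply,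
      Complex.re_ofReal_mul, smul_eq_mul]

lemma skew_mem_kerLre {X : Matrix (Fin n) (Fin n) ℂ} (hX : X ∈ skewU n) :
    Lre n (X.mulVec fun _ => 1) = 0 := by
  have hX' : Xᴴ = -X := hX
  have he : ∀ k j, (starRingEnd ℂ) (X k j) = - X j k := by
    intro k j
    have := congrFun (congrFun hX' j) k
    simpa [Matrix.conjTranspose_apply] using this
  show (∑ k, (X.mulVec fun _ => 1) k).re = 0
  have hs : ∑ k, (X.mulVec fun _ => 1) k = ∑ k, ∑ j, X k j := by
    simp [Matrix.mulVec, dotProduct]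
  rw [hs]
  set s : ℂ := ∑ k, ∑ j, X k j with hsdef
  have hconj : (starRingEnd ℂ) s = -s := by
    calc (starRingEnd ℂ) s = ∑ k, ∑ j, (starRingEnd ℂ) (X k j) := by
          rw [hsdef, map_sum]
          exact Finset.sum_congr rfl fun k _ => map_sum _ _ _
      _ = ∑ k, ∑ j, -X j k := by simp_rw [he]
      _ = -∑ k, ∑ j, X j k := by simp
      _ = -s := by rw [hsdef, Finset.sum_comm]
  have h0 : s + (starRingEnd ℂ) s = 0 := by rw [hconj, add_neg_cancel]
  rw [Complex.add_conj] at h0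
  have h1 : 2 * s.re = 0 := by exact_mod_cast h0
  linarith

lemma exists_skew_mulVec (hn : 0 < n) {v : Fin n → ℂ} (hv : (∑ i, v i).re = 0) :
    ∃ W, W ∈ skewU n ∧ W.mulVec (fun _ => 1) = v := by
  set a : ℂ := ∑ i, v i with ha
  have hca : (starRingEnd ℂ) a = -a := conj_of_re_zero hv
  have hn' : (n : ℂ) ≠ 0 := by
    exact_mod_cast Nat.cast_ne_zero.mpr hn.ne'
  set W : Matrix (Fin n) (Fin n) ℂ :=
    Matrix.of (fun k j => (v k - (starRingEnd ℂ) (v j)) / n - a / (n : ℂ) ^ 2) with hWdef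
  refine ⟨W, ?_, ?_⟩
  · show Wᴴ = -W
    ext k j
    rw [hWdef]
    simp only [Matrix.conjTranspose_apply, Matrix.of_apply, Matrix.neg_apply, Complex.star_def,
      map_sub, map_div₀, map_pow, map_natCast, Complex.conj_conj, hca]
    ring
  · funext k
    rw [hWdef]
    simp only [Matrix.mulVec, dotProduct, Matrix.of_apply, mul_one]
    rw [Finset.sum_sub_distrib, Finset.sum_const, Finset.card_fin, ← Finset.sum_div,
      Finset.sum_sub_distrib, Finset.sum_const, Finset.card_fin]
    have hc : ∑ j, (starRingEnd ℂ) (v j) = -a := by rw [← map_sum, hca]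
    rw [hc]
    simp only [nsmul_eq_mul]
    field_simp
    ring

lemma finrank_skewFix (hn : 0 < n) : finrank ℝ ↥(skewFix n) + 2 * n = n ^ 2 + 1 := by
  classical
  set ψ : ↥(skewU n) →ₗ[ℝ] (Fin n → ℂ) := (phiMap n).comp (skewU n).subtype with hψ
  have hker : finrank ℝ (LinearMap.ker ψ) = finrank ℝ ↥(skewFix n) := by
    have hsub : LinearMap.ker (phiMap n) ⊓ skewU n = skewFix n := by
      ext X
      rw [Submodule.mem_inf, mem_skewFix, LinearMap.mem_ker]
      exact ⟨fun h => ⟨h.2, h.1⟩, fun h => ⟨h.2, h.1⟩⟩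
    rw [hψ, LinearMap.ker_comp, finrank_comap_subtype, hsub]
  have hrange : LinearMap.range ψ = LinearMap.ker (Lre n) := by
    apply le_antisymm
    · rintro _ ⟨⟨X, hX⟩, rfl⟩
      exact skew_mem_kerLre hX
    · intro v hv
      obtain ⟨W, hW, hWv⟩ := exists_skew_mulVec hn hv
      exact ⟨⟨W, hW⟩, hWv⟩
  have h1 := LinearMap.finrank_range_add_finrank_ker ψ
  rw [hrange, hker, finrank_skewU] at h1
  have hone : Lre n (fun _ => (((n : ℝ)⁻¹ : ℝ) : ℂ)) = 1 := by
    show (∑ _i : Fin n, (((n : ℝ)⁻¹ : ℝ) : ℂ)).re = 1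
    rw [Finset.sum_const, Finset.card_fin]
    simp only [nsmul_eq_mul]
    rw [← Complex.ofReal_natCast, ← Complex.ofReal_mul, Complex.ofReal_re]
    field_simp
  have h2 := finrank_ker_functional (Lre n) _ hone
  have hfr : finrank ℝ (Fin n → ℂ) = 2 * n := by
    rw [Module.finrank_pi_fintype]
    simp [Complex.finrank_real_complex, Finset.sum_const, Fintype.card_fin, mul_comm]
  rw [hfr] at h2
  omega

section Kernel

lemma diag_mulVec_one {X : Matrix (Fin n) (Fin n) ℂ} (hX : X.IsDiag) :
    X.mulVec (fun _ => 1) = fun j => X j j := by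
  funext j
  show ∑ k, X j k * 1 = X j j
  rw [Finset.sum_eq_single j]
  · rw [mul_one]
  · intro k _ hk
    rw [hX (Ne.symm hk), zero_mul]
  · intro h
    exact absurd (Finset.mem_univ j) h

lemma eq_im_mul_I {z : ℂ} (hz : z.re = 0) : z = (z.im : ℂ) * Complex.I := by
  apply Complex.ext <;> simp [hz]

lemma re_mulVec_I (S : Matrix (Fin n) (Fin n) ℂ) (t : Fin n → ℝ) (k : Fin n) :
    ((S.mulVec fun j => (t j : ℂ) * Complex.I) k).re = -(((S.map Complex.im).mulVec t) k) := by
  simp only [Matrix.mulVec, dotProduct, Matrix.map_apply]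
  rw [Complex.re_sum, ← Finset.sum_neg_distrib]
  refine Finset.sum_congr rfl fun j _ => ?_
  simp [Complex.mul_re]

lemma conjT_mulVec_one {S : Matrix (Fin n) (Fin n) ℂ} (hS : S ∈ Matrix.unitaryGroup (Fin n) ℂ)
    (hS1 : S.mulVec (fun _ => 1) = fun _ => 1) :
    Sᴴ.mulVec (fun _ => (1 : ℂ)) = fun _ => 1 := by
  have h1 : Sᴴ * S = 1 := by
    have := (Unitary.mem_iff.mp hS).1
    rwa [Matrix.star_eq_conjTranspose] at this
  calc Sᴴ.mulVec (fun _ => (1 : ℂ)) = Sᴴ.mulVec (S.mulVec fun _ => 1) := by rw [hS1]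
    _ = (Sᴴ * S).mulVec (fun _ => 1) := by rw [← Matrix.mulVec_mulVec]
    _ = fun _ => 1 := by rw [h1, Matrix.one_mulVec]

noncomputable def gmap (n : ℕ) (hn : 0 < n) (S : Matrix (Fin n) (Fin n) ℂ) :
    ↥(LinearMap.ker (CSmap n hn S)) →ₗ[ℝ] (Fin n → ℝ) where
  toFun p := fun j => ((p.1.2.2 : Matrix (Fin n) (Fin n) ℂ) j j).im
  map_add' p q := by
    funext j
    simp
  map_smul' r p := by
    funext j
    simp [Complex.smul_re]

lemma gmap_inj (hn : 0 < n) (S : Matrix (Fin n) (Fin n) ℂ) :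
    Function.Injective (gmap n hn S) := by
  have hker0 : LinearMap.ker (gmap n hn S) = ⊥ := by
    rw [eq_bot_iff]
    rintro ⟨⟨⟨X, hX⟩, ⟨Y, hY⟩, ⟨Z, hZ⟩⟩, hker⟩ hp
    rw [LinearMap.mem_ker] at hp
    have hZ0 : Z = 0 := by
      ext i j
      by_cases hij : i = j
      · subst hij
        rw [Matrix.zero_apply]
        apply Complex.ext
        · exact hZ.2.1 i
        · have := congrFun hp i
          have h' : (Z i i).im = 0 := this
          simpa using h'
      · rw [Matrix.zero_apply]
        exact hZ.1 hij
    have hmem : X + Y + S * Z * Sᴴ = 0 := hker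
    rw [hZ0] at hmem
    simp only [Matrix.mul_zero, Matrix.zero_mul, add_zero] at hmem
    have hXv : X.mulVec (fun _ => 1) = 0 := by
      have h1 : (X + Y).mulVec (fun _ => 1) = 0 := by rw [hmem, Matrix.zero_mulVec]
      rw [Matrix.add_mulVec, hY.2, add_zero] at h1
      exact h1
    have hX0 : X = 0 := by
      ext i j
      by_cases hij : i = j
      · subst hij
        rw [Matrix.zero_apply]
        have := congrFun (diag_mulVec_one hX.1) i
        rw [hXv] at this
        exact (this.symm.trans rfl).symm ▸ this.symm
      · rw [Matrix.zero_apply]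
        exact hX.1 hij
    have hY0 : Y = 0 := by
      rw [hX0, zero_add] at hmem
      exact hmem
    rw [Submodule.mem_bot]
    apply Subtype.ext
    refine Prod.ext (Subtype.ext ?_) (Prod.ext (Subtype.ext ?_) (Subtype.ext ?_))
    · exact hX0
    · exact hY0
    · exact hZ0
  intro a b hab
  have hmem : a - b ∈ LinearMap.ker (gmap n hn S) := by
    have hsub : (gmap n hn S) (a - b) = (gmap n hn S) a - (gmap n hn S) b :=
      LinearMap.map_sub (gmap n hn S) a b
    rw [LinearMap.mem_ker, hsub, hab, sub_self]
  rw [hker0, Submodule.mem_bot] at hmem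
  exact sub_eq_zero.mp hmem

lemma gmap_range (hn : 0 < n) {S : Matrix (Fin n) (Fin n) ℂ}
    (hS : S ∈ Matrix.unitaryGroup (Fin n) ℂ)
    (hS1 : S.mulVec (fun _ => 1) = fun _ => 1) :
    LinearMap.range (gmap n hn S) =
      LinearMap.ker ((S.map Complex.im).mulVecLin) ⊓
        LinearMap.ker (LinearMap.proj (R := ℝ) (φ := fun _ : Fin n => ℝ) (⟨0, hn⟩ : Fin n)) := by
  apply le_antisymm
  · rintro _ ⟨⟨⟨⟨X, hX⟩, ⟨Y, hY⟩, ⟨Z, hZ⟩⟩, hker⟩, rfl⟩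
    rw [Submodule.mem_inf]
    constructor
    · rw [LinearMap.mem_ker]
      have hmem : X + Y + S * Z * Sᴴ = 0 := hker
      have hZw : Z.mulVec (fun _ => 1) = fun j => ((Z j j).im : ℂ) * Complex.I := by
        rw [diag_mulVec_one hZ.1]
        funext j
        exact eq_im_mul_I (hZ.2.1 j)
      have h2 : (S * Z * Sᴴ).mulVec (fun _ => 1) =
          S.mulVec (fun j => ((Z j j).im : ℂ) * Complex.I) := by
        rw [← Matrix.mulVec_mulVec, ← Matrix.mulVec_mulVec, conjT_mulVec_one hS hS1, hZw]
      have h1 : X.mulVec (fun _ => 1) + Y.mulVec (fun _ => 1) +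
          (S * Z * Sᴴ).mulVec (fun _ => 1) = 0 := by
        rw [← Matrix.add_mulVec, ← Matrix.add_mulVec, hmem, Matrix.zero_mulVec]
      rw [hY.2, add_zero, h2, diag_mulVec_one hX.1] at h1
      ext k
      have h3 := congrFun h1 k
      rw [Pi.add_apply, Pi.zero_apply] at h3
      have h4 := congrArg Complex.re h3
      rw [Complex.add_re, hX.2 k, zero_add, re_mulVec_I] at h4
      have hg : (gmap n hn S) ⟨(⟨X, hX⟩, ⟨Y, hY⟩, ⟨Z, hZ⟩), hker⟩ = fun j => (Z j j).im := rfl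
      rw [Matrix.mulVecLin_apply, hg, Pi.zero_apply]
      simp only [Complex.zero_re] at h4
      linarith [h4]
    · rw [LinearMap.mem_ker]
      show ((Z ⟨0, hn⟩ ⟨0, hn⟩).im) = 0
      rw [hZ.2.2]
      simp
  · intro t ht
    rw [Submodule.mem_inf] at ht
    obtain ⟨ht1, ht2⟩ := ht
    rw [LinearMap.mem_ker, Matrix.mulVecLin_apply] at ht1
    have ht2' : t ⟨0, hn⟩ = 0 := ht2
    set w : Fin n → ℂ := fun j => (t j : ℂ) * Complex.I with hw
    set Z : Matrix (Fin n) (Fin n) ℂ := Matrix.diagonal w with hZdef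
    set X : Matrix (Fin n) (Fin n) ℂ := -(Matrix.diagonal (S.mulVec w)) with hXdef
    set Y : Matrix (Fin n) (Fin n) ℂ := -(S * Z * Sᴴ) - X with hYdef
    have hre : ∀ k, ((S.mulVec w) k).re = 0 := by
      intro k
      rw [hw, re_mulVec_I, congrFun ht1 k]
      simp
    have hZmem : Z ∈ diagImag₁ n hn := by
      refine ⟨Matrix.isDiag_diagonal _, fun i => ?_, ?_⟩
      · rw [hZdef, Matrix.diagonal_apply_eq]
        simp [hw]
      · rw [hZdef, Matrix.diagonal_apply_eq]
        simp [hw, ht2']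
    have hXmem : X ∈ diagImag n := by
      refine ⟨(Matrix.isDiag_diagonal _).neg, fun i => ?_⟩
      rw [hXdef]
      simp [hre i]
    have hZskew : Zᴴ = -Z := by
      rw [hZdef, Matrix.diagonal_conjTranspose, Matrix.diagonal_neg]
      refine congrArg Matrix.diagonal (funext fun j => ?_)
      have hj : (w j).re = 0 := by simp [hw]
      simpa [Complex.star_def] using conj_of_re_zero hj
    have hXskew : Xᴴ = -X := by
      rw [hXdef, Matrix.conjTranspose_neg, Matrix.diagonal_conjTranspose, neg_neg]
      have hst : star (S.mulVec w) = fun k => -((S.mulVec w) k) := funext fun k => by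
        simpa [Complex.star_def] using conj_of_re_zero (hre k)
      rw [hst]
      have : (fun k => -((S.mulVec w) k)) = fun k => -(S.mulVec w) k := rfl
      rw [this, ← Matrix.diagonal_neg, neg_neg]
    have hYmem : Y ∈ skewFix n := by
      constructor
      · rw [hYdef]
        simp only [Matrix.conjTranspose_sub, Matrix.conjTranspose_neg, Matrix.conjTranspose_mul,
          Matrix.conjTranspose_conjTranspose, hZskew, hXskew]
        simp only [Matrix.neg_mul, Matrix.mul_neg, neg_neg, neg_sub, sub_neg_eq_add,
          Matrix.mul_assoc]
        abel
      · have hZv : Z.mulVec (fun _ => 1) = w := by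
          rw [diag_mulVec_one hZmem.1]
          funext j
          rw [hZdef, Matrix.diagonal_apply_eq]
        have hXv : X.mulVec (fun _ => 1) = -(S.mulVec w) := by
          rw [hXdef, Matrix.neg_mulVec, diag_mulVec_one (Matrix.isDiag_diagonal _)]
          congr 1
          funext j
          rw [Matrix.diagonal_apply_eq]
        rw [hYdef, Matrix.sub_mulVec, Matrix.neg_mulVec, ← Matrix.mulVec_mulVec,
          ← Matrix.mulVec_mulVec, conjT_mulVec_one hS hS1, hZv, hXv]
        simp
    refine ⟨⟨(⟨X, hXmem⟩, ⟨Y, hYmem⟩, ⟨Z, hZmem⟩), ?_⟩, ?_⟩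
    · show X + Y + S * Z * Sᴴ = 0
      rw [hYdef]
      abel
    · funext j
      show (Z j j).im = t j
      rw [hZdef, Matrix.diagonal_apply_eq]
      simp [hw]

end Kernel

end CSaux

open Module

/-- The rank of `C_S : 𝔡 × 𝔣 × 𝔡₁ → 𝔲` equals `(n−1)² + n + rank(Im S)` for any
unitary `S` fixing the all-ones vector. -/
theorem rank_CSmap (n : ℕ) (hn : 0 < n) (S : Matrix (Fin n) (Fin n) ℂ)
    (hS : S ∈ Matrix.unitaryGroup (Fin n) ℂ)
    (hS1 : S.mulVec (fun _ => 1) = (fun _ => 1)) :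
    Module.finrank ℝ (LinearMap.range (CSmap n hn S)) =
      (n - 1) ^ 2 + n + (S.map Complex.im).rank := by
  classical
  haveI : FiniteDimensional ℝ (↥(diagImag n) × ↥(skewFix n) × ↥(diagImag₁ n hn)) :=
    Module.Finite.prod
  have hrn := LinearMap.finrank_range_add_finrank_ker (CSmap n hn S)
  have hdom : finrank ℝ (↥(diagImag n) × ↥(skewFix n) × ↥(diagImag₁ n hn)) =
      finrank ℝ ↥(diagImag n) + (finrank ℝ ↥(skewFix n) + finrank ℝ ↥(diagImag₁ n hn)) := by
    rw [Module.finrank_prod, Module.finrank_prod]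
  set i0 : Fin n := ⟨0, hn⟩ with hi0
  set K' : Submodule ℝ (Fin n → ℝ) := LinearMap.ker ((S.map Complex.im).mulVecLin) with hK'
  set H0 : Submodule ℝ (Fin n → ℝ) :=
    LinearMap.ker (LinearMap.proj (R := ℝ) (φ := fun _ : Fin n => ℝ) i0) with hH0
  have hkerdim : finrank ℝ (LinearMap.ker (CSmap n hn S)) = finrank ℝ ↥(K' ⊓ H0) := by
    rw [← CSaux.gmap_range hn hS hS1, LinearMap.finrank_range_of_inj (CSaux.gmap_inj hn S)]
  have hK1 : (S.map Complex.im).rank + finrank ℝ ↥K' = n := by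
    have h := LinearMap.finrank_range_add_finrank_ker ((S.map Complex.im).mulVecLin)
    rw [Module.finrank_pi, Fintype.card_fin] at h
    exact h
  have hone_mem : (fun _ => (1 : ℝ)) ∈ K' := by
    rw [hK', LinearMap.mem_ker]
    ext k
    show ((S.map Complex.im).mulVec fun _ => 1) k = 0
    have hk := congrFun hS1 k
    simp only [Matrix.mulVec, dotProduct, mul_one] at hk ⊢
    simp only [Matrix.map_apply]
    rw [← Complex.im_sum, hk]
    simp
  have hT : finrank ℝ ↥K' = 1 + finrank ℝ ↥(K' ⊓ H0) := by
    have h := CSaux.finrank_ker_functional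
      ((LinearMap.proj (R := ℝ) (φ := fun _ : Fin n => ℝ) i0).comp K'.subtype)
      ⟨fun _ => 1, hone_mem⟩ rfl
    rw [LinearMap.ker_comp, CSaux.finrank_comap_subtype, inf_comm] at h
    exact h.symm
  rw [hdom, CSaux.finrank_diagImag, hkerdim] at hrn
  have hf := CSaux.finrank_skewFix (n := n) hn
  have hd1 := CSaux.finrank_diagImag₁ (n := n) hn
  obtain ⟨m, rfl⟩ : ∃ m, n = m + 1 := ⟨n - 1, by omega⟩
  simp only [Nat.add_sub_cancel]
  have hsq : (m + 1) ^ 2 = m ^ 2 + 2 * m + 1 := by ring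
  rw [hsq] at hf
  generalize m ^ 2 = p at hf ⊢
  omega
end

section
/- Let n ≥ 1 and let u ∈ ℂⁿ be such that the sum s = ∑_k u_k is a real number with s > 0. Then max_k | |u_k| − u_k |² ≤ ‖u‖₁ · (‖u‖₁ − s), where ‖u‖₁ = ∑_k |u_k| and |u_k| is viewed as a complex number in the difference |u_k| − u_k. -/
lemma key_real_ineq (a r y R ρ : ℝ) (ha : 0 ≤ a) (hR : 0 ≤ R) (haa : a^2 = r^2 + y^2)
    (hRR : ρ^2 + y^2 ≤ R^2) (hs : 0 < r + ρ) :
    (a-r)^2 + y^2 ≤ (a+R) * ((a+R) - (r+ρ)) := by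
  have hra : r ≤ a := by nlinarith [sq_nonneg y, sq_nonneg (a+r)]
  have hra' : -a ≤ r := by nlinarith [sq_nonneg y, sq_nonneg (a-r)]
  have hρR : ρ ≤ R := by nlinarith [sq_nonneg y]
  have hρR' : -R ≤ ρ := by nlinarith [sq_nonneg y]
  rcases le_or_gt a R with h | h
  · nlinarith [mul_nonneg (sub_nonneg.2 hra) (sub_nonneg.2 h),
      mul_nonneg (add_nonneg ha hR) (sub_nonneg.2 hρR)]
  · have hr : 0 ≤ r := by
      by_contra hr
      push_neg at hr
      nlinarith
    nlinarith [mul_nonneg (sub_nonneg.2 hra) (add_nonneg hR hr),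
      mul_nonneg (sub_nonneg.2 (hρR.trans h.le)) (sub_nonneg.2 hρR)]

/-- If `u ∈ ℂⁿ` has real and positive entry-sum `s`, then for every `k`,
`| |u_k| − u_k |² ≤ ‖u‖₁·(‖u‖₁ − s)`. -/
theorem abs_sub_self_sq_le (n : ℕ) (hn : 1 ≤ n) (u : Fin n → ℂ)
    (hreal : (∑ k, u k).im = 0) (hpos : 0 < (∑ k, u k).re) :
    ∀ k, ‖((‖u k‖ : ℂ) - u k)‖ ^ 2 ≤
      (∑ j, ‖u j‖) * ((∑ j, ‖u j‖) - (∑ k, u k).re) := by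
  intro k
  set t := ∑ k, u k with ht
  set L := ∑ j, ‖u j‖ with hL
  set a := ‖u k‖ with haDef
  set r := (u k).re with hrDef
  set y := (u k).im with hyDef
  set w := t - u k with hw
  -- sum decomposition
  have hsum : u k + ∑ j ∈ Finset.univ.erase k, u j = t :=
    Finset.add_sum_erase _ _ (Finset.mem_univ k)
  have hsumA : a + ∑ j ∈ Finset.univ.erase k, ‖u j‖ = L :=
    Finset.add_sum_erase Finset.univ (fun j => ‖u j‖) (Finset.mem_univ k)
  have hwabs : ‖w‖ ≤ L - a := by
    have h1 : w = ∑ j ∈ Finset.univ.erase k, u j := by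
      rw [hw, ← hsum]; ring
    rw [h1]
    have := norm_sum_le (Finset.univ.erase k) u
    linarith [this, hsumA]
  have hR : 0 ≤ L - a := le_trans (norm_nonneg w) hwabs
  have hRR : (t.re - r)^2 + y^2 ≤ (L - a)^2 := by
    have h2 : (‖w‖)^2 ≤ (L - a)^2 := by
      apply sq_le_sq' _ hwabs
      linarith [norm_nonneg w]
    rw [Complex.sq_norm, Complex.normSq_apply] at h2
    have hwre : w.re = t.re - r := by simp [hw, hrDef]
    have hwim : w.im = -y := by simp [hw, hreal, hyDef]
    rw [hwre, hwim] at h2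
    nlinarith [h2]
  have haa : a^2 = r^2 + y^2 := by
    rw [haDef, Complex.sq_norm, Complex.normSq_apply]; ring
  have hs : 0 < r + (t.re - r) := by linarith
  have key := key_real_ineq a r y (L - a) (t.re - r) (norm_nonneg _) hR haa hRR hs
  have hlhs : ‖((a : ℂ) - u k)‖ ^ 2 = (a - r)^2 + y^2 := by
    rw [Complex.sq_norm, Complex.normSq_apply]
    simp
    ring
  rw [hlhs]
  calc (a - r)^2 + y^2 ≤ (a + (L - a)) * ((a + (L - a)) - (r + (t.re - r))) := key
    _ = L * (L - t.re) := by ring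
end
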